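/- arXiv:2106.08283 — 5 statements merged into one kernel-verified Lean document; each statement's English description precedes it below -/
import Mathlib

section
/- Let m₁, m₂ ∈ ℝ and σ > 0. Then the total variation distance between the real Gaussian measures with means m₁ and m₂ and common variance σ² equals 2Φ(|m₁ − m₂| / (2σ)) − 1, where Φ is the cumulative distribution function of the standard real Gaussian. -/
open MeasureTheory ProbabilityTheory Real
open scoped Classical RealInnerProductSpace BigOperators

/-- KL divergence: `∫ log(dμ/dν) dμ` if `μ ≪ ν`, else `⊤`. -/
noncomputable def klDiv {Ω : Type*} [MeasurableSpace Ω] (μ ν : Measure Ω) : EReal :=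
  if μ ≪ ν then ((∫ x, Real.log ((μ.rnDeriv ν x).toReal) ∂μ : ℝ) : EReal) else ⊤

/-- Total variation distance between measures. -/
noncomputable def tvDist {Ω : Type*} [MeasurableSpace Ω] (μ ν : Measure Ω) : ℝ :=
  ⨆ A : {s : Set Ω // MeasurableSet s}, |(μ A.1).toReal - (ν A.1).toReal|

/-- Isotropic Gaussian `N(m, σ²I)` on `ℝ^d` (as `EuclideanSpace ℝ (Fin d)`):
the product of coordinatewise real Gaussians with means `m i` and variance `σ²`. -/
noncomputable def gaussianPi {d : ℕ} (m : EuclideanSpace ℝ (Fin d)) (σ : ℝ) :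
    Measure (EuclideanSpace ℝ (Fin d)) :=
  (Measure.pi fun i => gaussianReal (m i) ⟨σ ^ 2, sq_nonneg σ⟩).map
    (MeasurableEquiv.toLp 2 (Fin d → ℝ))

/-- Standard Gaussian cumulative distribution function `Φ`. -/
noncomputable def stdGaussCDF (x : ℝ) : ℝ := cdf (gaussianReal 0 1) x

/-- Clipping map `Clip_ρ(w) = w / max(1, ‖w‖/ρ)`. -/
noncomputable def clip {H : Type*} [NormedAddCommGroup H] [NormedSpace ℝ H] (ρ : ℝ) (w : H) : H :=
  (max 1 (‖w‖ / ρ))⁻¹ • w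

open Set
open scoped ENNReal NNReal

instance instIsProbabilityMeasureGaussianRealSubtype (μ : ℝ) (v : {r : ℝ // 0 ≤ r}) :
    IsProbabilityMeasure (gaussianReal μ v) := instIsProbabilityMeasureGaussianReal μ v

lemma vne {σ : ℝ} (hσ : 0 < σ) : (⟨σ ^ 2, sq_nonneg σ⟩ : ℝ≥0) ≠ 0 := by
  intro h
  have h' := congrArg NNReal.toReal h
  change σ ^ 2 = (0 : ℝ) at h'
  nlinarith

lemma map_std {σ : ℝ} (hσ : 0 < σ) (m : ℝ) :
    (gaussianReal 0 1).map (fun x => σ * x + m) = gaussianReal m ⟨σ ^ 2, sq_nonneg σ⟩ := by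
  have h : (fun x : ℝ => σ * x + m) = (· + m) ∘ (σ * ·) := rfl
  have hv1 : NNReal.mk (σ ^ 2) (sq_nonneg σ) * 1 = ⟨σ ^ 2, sq_nonneg σ⟩ := mul_one _
  rw [h, ← Measure.map_map (measurable_add_const m) (measurable_const_mul σ),
    gaussianReal_map_const_mul, gaussianReal_map_add_const, hv1]
  norm_num

lemma gauss_Iic {σ : ℝ} (hσ : 0 < σ) (m a : ℝ) :
    ((gaussianReal m ⟨σ ^ 2, sq_nonneg σ⟩) (Iic a)).toReal = stdGaussCDF ((a - m) / σ) := by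
  rw [← map_std hσ m, Measure.map_apply (by fun_prop) measurableSet_Iic]
  have h : (fun x : ℝ => σ * x + m) ⁻¹' (Iic a) = Iic ((a - m) / σ) := by
    ext x
    simp only [mem_preimage, mem_Iic]
    rw [le_div_iff₀ hσ]
    constructor <;> intro <;> nlinarith
  rw [h, stdGaussCDF, cdf_eq_real, measureReal_def]

lemma stdGaussCDF_neg (x : ℝ) : stdGaussCDF (-x) = 1 - stdGaussCDF x := by
  have hmap : (gaussianReal 0 1).map (fun y : ℝ => (-1 : ℝ) * y) = gaussianReal 0 1 := by
    have hv1 : NNReal.mk ((-1 : ℝ) ^ 2) (sq_nonneg _) * 1 = 1 := by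
      rw [mul_one]
      exact NNReal.coe_injective (by norm_num)
    rw [gaussianReal_map_const_mul, hv1]
    norm_num
  haveI : NullSingletonClass (gaussianReal (0 : ℝ) 1) :=
    ⟨fun y => gaussianReal_absolutelyContinuous 0 one_ne_zero (measure_singleton y)⟩
  have h1 : stdGaussCDF (-x) = ((gaussianReal 0 1) (Ici x)).toReal := by
    have hset : (fun y : ℝ => (-1 : ℝ) * y) ⁻¹' (Iic (-x)) = Ici x := by
      ext y
      simp only [mem_preimage, mem_Iic, mem_Ici]
      constructor <;> intro <;> linarith
    rw [stdGaussCDF, cdf_eq_real, measureReal_def]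
    conv_lhs => rw [← hmap]
    rw [Measure.map_apply (by fun_prop) measurableSet_Iic, hset]
  have h2 : (gaussianReal 0 1) (Iio x) = (gaussianReal 0 1) (Iic x) :=
    measure_congr Iio_ae_eq_Iic
  have h3 : (gaussianReal 0 1) (Iio x) + (gaussianReal 0 1) (Ici x) = 1 := by
    rw [← compl_Iio (a := x), measure_add_measure_compl measurableSet_Iio, measure_univ]
  rw [h2] at h3
  have h4 := congrArg ENNReal.toReal h3
  rw [ENNReal.toReal_add (measure_ne_top _ _) (measure_ne_top _ _), ENNReal.toReal_one] at h4
  have h5 : stdGaussCDF x = ((gaussianReal 0 1) (Iic x)).toReal := by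
    rw [stdGaussCDF, cdf_eq_real, measureReal_def]
  rw [h1, h5]
  linarith

lemma gauss_Ici {σ : ℝ} (hσ : 0 < σ) (m a : ℝ) :
    ((gaussianReal m ⟨σ ^ 2, sq_nonneg σ⟩) (Ici a)).toReal = 1 - stdGaussCDF ((a - m) / σ) := by
  haveI : NullSingletonClass (gaussianReal m (⟨σ ^ 2, sq_nonneg σ⟩ : ℝ≥0)) :=
    ⟨fun y => gaussianReal_absolutelyContinuous m (vne hσ) (measure_singleton y)⟩
  have h2 : (gaussianReal m (⟨σ ^ 2, sq_nonneg σ⟩ : ℝ≥0)) (Iio a)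
      = (gaussianReal m (⟨σ ^ 2, sq_nonneg σ⟩ : ℝ≥0)) (Iic a) := measure_congr Iio_ae_eq_Iic
  have h3 : (gaussianReal m (⟨σ ^ 2, sq_nonneg σ⟩ : ℝ≥0)) (Iio a)
      + (gaussianReal m (⟨σ ^ 2, sq_nonneg σ⟩ : ℝ≥0)) (Ici a) = 1 := by
    rw [← compl_Iio (a := a), measure_add_measure_compl measurableSet_Iio, measure_univ]
  rw [h2] at h3
  have h4 := congrArg ENNReal.toReal h3
  rw [ENNReal.toReal_add (measure_ne_top _ _) (measure_ne_top _ _), ENNReal.toReal_one] at h4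
  rw [gauss_Iic hσ] at h4
  linarith

lemma key {μ ν : Measure ℝ} [IsFiniteMeasure μ] [IsFiniteMeasure ν] {p q : ℝ → ℝ≥0∞}
    (hμ : μ = volume.withDensity p) (hν : ν = volume.withDensity q)
    {S A : Set ℝ} (hS : MeasurableSet S) (hA : MeasurableSet A)
    (h1 : ∀ x ∈ S, q x ≤ p x) (h2 : ∀ x ∈ Sᶜ, p x ≤ q x) :
    (μ A).toReal - (ν A).toReal ≤ (μ S).toReal - (ν S).toReal := by
  have e1 : μ (A \ S) ≤ ν (A \ S) := by
    rw [hμ, hν, withDensity_apply _ (hA.diff hS), withDensity_apply _ (hA.diff hS)]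
    exact setLIntegral_mono' (hA.diff hS) (fun x hx => h2 x hx.2)
  have e2 : ν (S \ A) ≤ μ (S \ A) := by
    rw [hμ, hν, withDensity_apply _ (hS.diff hA), withDensity_apply _ (hS.diff hA)]
    exact setLIntegral_mono' (hS.diff hA) (fun x hx => h1 x hx.1)
  have HμA : (μ A).toReal = (μ (A ∩ S)).toReal + (μ (A \ S)).toReal := by
    rw [← ENNReal.toReal_add (measure_ne_top _ _) (measure_ne_top _ _),
      measure_inter_add_diff A hS]
  have HνA : (ν A).toReal = (ν (A ∩ S)).toReal + (ν (A \ S)).toReal := by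
    rw [← ENNReal.toReal_add (measure_ne_top _ _) (measure_ne_top _ _),
      measure_inter_add_diff A hS]
  have HμS : (μ S).toReal = (μ (A ∩ S)).toReal + (μ (S \ A)).toReal := by
    rw [inter_comm, ← ENNReal.toReal_add (measure_ne_top _ _) (measure_ne_top _ _),
      measure_inter_add_diff S hA]
  have HνS : (ν S).toReal = (ν (A ∩ S)).toReal + (ν (S \ A)).toReal := by
    rw [inter_comm, ← ENNReal.toReal_add (measure_ne_top _ _) (measure_ne_top _ _),
      measure_inter_add_diff S hA]
  have E1 : (μ (A \ S)).toReal ≤ (ν (A \ S)).toReal :=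
    ENNReal.toReal_mono (measure_ne_top _ _) e1
  have E2 : (ν (S \ A)).toReal ≤ (μ (S \ A)).toReal :=
    ENNReal.toReal_mono (measure_ne_top _ _) e2
  linarith

lemma stdGaussCDF_zero : stdGaussCDF 0 = 1 / 2 := by
  have h := stdGaussCDF_neg 0
  rw [neg_zero] at h
  linarith

lemma tv_ge {σ : ℝ} (hσ : 0 < σ) {m₁ m₂ : ℝ} (h : m₂ ≤ m₁) :
    tvDist (gaussianReal m₁ ⟨σ ^ 2, sq_nonneg σ⟩) (gaussianReal m₂ ⟨σ ^ 2, sq_nonneg σ⟩)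
      = 2 * stdGaussCDF ((m₁ - m₂) / (2 * σ)) - 1 := by
  have hv := vne hσ
  have hσ' : σ ≠ 0 := ne_of_gt hσ
  have hμd : gaussianReal m₁ (⟨σ ^ 2, sq_nonneg σ⟩ : ℝ≥0)
      = volume.withDensity (gaussianPDF m₁ ⟨σ ^ 2, sq_nonneg σ⟩) :=
    gaussianReal_of_var_ne_zero _ hv
  have hνd : gaussianReal m₂ (⟨σ ^ 2, sq_nonneg σ⟩ : ℝ≥0)
      = volume.withDensity (gaussianPDF m₂ ⟨σ ^ 2, sq_nonneg σ⟩) :=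
    gaussianReal_of_var_ne_zero _ hv
  have pdfle : ∀ a b x : ℝ, (x - a) ^ 2 ≤ (x - b) ^ 2 →
      gaussianPDF b ⟨σ ^ 2, sq_nonneg σ⟩ x ≤ gaussianPDF a ⟨σ ^ 2, sq_nonneg σ⟩ x := by
    intro a b x hx
    refine ENNReal.ofReal_le_ofReal ?_
    unfold gaussianPDFReal
    refine mul_le_mul_of_nonneg_left ?_ (inv_nonneg.2 (Real.sqrt_nonneg _))
    refine Real.exp_le_exp.2 ?_
    gcongr
    exact mul_nonneg zero_le_two (sq_nonneg σ)
  have hcomp1 : ∀ x ∈ Ici ((m₁ + m₂) / 2), gaussianPDF m₂ ⟨σ ^ 2, sq_nonneg σ⟩ x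
      ≤ gaussianPDF m₁ ⟨σ ^ 2, sq_nonneg σ⟩ x := by
    intro x hx
    simp only [mem_Ici] at hx
    exact pdfle _ _ _ (by nlinarith)
  have hcomp2 : ∀ x ∈ Iic ((m₁ + m₂) / 2), gaussianPDF m₁ ⟨σ ^ 2, sq_nonneg σ⟩ x
      ≤ gaussianPDF m₂ ⟨σ ^ 2, sq_nonneg σ⟩ x := by
    intro x hx
    simp only [mem_Iic] at hx
    exact pdfle _ _ _ (by nlinarith)
  have e1 : ((m₁ + m₂) / 2 - m₁) / σ = -((m₁ - m₂) / (2 * σ)) := by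
    field_simp
    ring
  have e2 : ((m₁ + m₂) / 2 - m₂) / σ = (m₁ - m₂) / (2 * σ) := by
    field_simp
    ring
  have val1 : ((gaussianReal m₁ ⟨σ ^ 2, sq_nonneg σ⟩) (Ici ((m₁ + m₂) / 2))).toReal
      = stdGaussCDF ((m₁ - m₂) / (2 * σ)) := by
    rw [gauss_Ici hσ, e1, stdGaussCDF_neg]
    ring
  have val2 : ((gaussianReal m₂ ⟨σ ^ 2, sq_nonneg σ⟩) (Ici ((m₁ + m₂) / 2))).toReal
      = 1 - stdGaussCDF ((m₁ - m₂) / (2 * σ)) := by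
    rw [gauss_Ici hσ, e2]
  have val3 : ((gaussianReal m₁ ⟨σ ^ 2, sq_nonneg σ⟩) (Iic ((m₁ + m₂) / 2))).toReal
      = 1 - stdGaussCDF ((m₁ - m₂) / (2 * σ)) := by
    rw [gauss_Iic hσ, e1, stdGaussCDF_neg]
  have val4 : ((gaussianReal m₂ ⟨σ ^ 2, sq_nonneg σ⟩) (Iic ((m₁ + m₂) / 2))).toReal
      = stdGaussCDF ((m₁ - m₂) / (2 * σ)) := by
    rw [gauss_Iic hσ, e2]
  have bound : ∀ A : {s : Set ℝ // MeasurableSet s},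
      |((gaussianReal m₁ ⟨σ ^ 2, sq_nonneg σ⟩) A.1).toReal
        - ((gaussianReal m₂ ⟨σ ^ 2, sq_nonneg σ⟩) A.1).toReal|
      ≤ 2 * stdGaussCDF ((m₁ - m₂) / (2 * σ)) - 1 := by
    intro A
    rw [abs_le]
    constructor
    · have hk := key hνd hμd measurableSet_Iic A.2 hcomp2
        (fun x hx => hcomp1 x (by simp only [compl_Iic, mem_Ioi] at hx; exact le_of_lt hx))
      rw [val4, val3] at hk
      linarith
    · have hk := key hμd hνd measurableSet_Ici A.2 hcomp1
        (fun x hx => hcomp2 x (by simp only [compl_Ici, mem_Iio] at hx; exact le_of_lt hx))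
      rw [val1, val2] at hk
      linarith
  have hδ0 : (0 : ℝ) ≤ (m₁ - m₂) / (2 * σ) := div_nonneg (by linarith) (by linarith)
  have hmono : stdGaussCDF 0 ≤ stdGaussCDF ((m₁ - m₂) / (2 * σ)) := monotone_cdf _ hδ0
  have hVnn : 0 ≤ 2 * stdGaussCDF ((m₁ - m₂) / (2 * σ)) - 1 := by
    rw [stdGaussCDF_zero] at hmono
    linarith
  haveI : Nonempty {s : Set ℝ // MeasurableSet s} := ⟨⟨∅, MeasurableSet.empty⟩⟩
  rw [tvDist]
  refine le_antisymm (ciSup_le bound) ?_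
  have hVal : |((gaussianReal m₁ ⟨σ ^ 2, sq_nonneg σ⟩) (Ici ((m₁ + m₂) / 2))).toReal
      - ((gaussianReal m₂ ⟨σ ^ 2, sq_nonneg σ⟩) (Ici ((m₁ + m₂) / 2))).toReal|
      = 2 * stdGaussCDF ((m₁ - m₂) / (2 * σ)) - 1 := by
    rw [val1, val2, abs_of_nonneg (by linarith)]
    ring
  refine le_ciSup_of_le ⟨2 * stdGaussCDF ((m₁ - m₂) / (2 * σ)) - 1, ?_⟩
    (⟨Ici ((m₁ + m₂) / 2), measurableSet_Ici⟩ : {s : Set ℝ // MeasurableSet s})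
    (le_of_eq hVal.symm)
  rintro x ⟨A, rfl⟩
  exact bound A


theorem tv_dist_gaussianReal (m₁ m₂ σ : ℝ) (hσ : 0 < σ) :
    tvDist (gaussianReal m₁ ⟨σ ^ 2, sq_nonneg σ⟩) (gaussianReal m₂ ⟨σ ^ 2, sq_nonneg σ⟩)
      = 2 * stdGaussCDF (|m₁ - m₂| / (2 * σ)) - 1 := by
  have hsymm : tvDist (gaussianReal m₁ ⟨σ ^ 2, sq_nonneg σ⟩)
      (gaussianReal m₂ ⟨σ ^ 2, sq_nonneg σ⟩)
      = tvDist (gaussianReal m₂ ⟨σ ^ 2, sq_nonneg σ⟩)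
        (gaussianReal m₁ ⟨σ ^ 2, sq_nonneg σ⟩) := by
    rw [tvDist, tvDist]
    congr 1
    ext A
    rw [abs_sub_comm]
  rcases le_total m₂ m₁ with hle | hle
  · rw [tv_ge hσ hle, abs_of_nonneg (by linarith : (0:ℝ) ≤ m₁ - m₂)]
  · rw [hsymm, tv_ge hσ hle, abs_of_nonpos (by linarith : m₁ - m₂ ≤ 0)]
    norm_num
end

section
/- Let H be a real inner product space, let β > 0, let g, g' : H → H with g β-co-coercive, let 0 < η ≤ 1/β, and let B ≥ 0 be such that ‖g'(w) − g(w)‖ ≤ B for all w ∈ H. Then for all w₁, w₂ ∈ H, the one-step SGD iterates satisfy ‖(w₁ − η g(w₁)) − (w₂ − η g'(w₂))‖² ≤ ‖w₁ − w₂‖² + 2ηB‖w₁ − w₂‖ + 2η²B². -/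
open MeasureTheory ProbabilityTheory Real
open scoped Classical RealInnerProductSpace BigOperators

theorem one_step_sgd_deviation {H : Type*} [NormedAddCommGroup H]
    [InnerProductSpace ℝ H] (β : ℝ) (hβ : 0 < β) (g g' : H → H)
    (hg : ∀ w₁ w₂ : H, ‖g w₁ - g w₂‖ ^ 2 ≤ β * ⟪w₁ - w₂, g w₁ - g w₂⟫)
    (η : ℝ) (hη0 : 0 < η) (hη : η ≤ 1 / β)
    (B : ℝ) (hB0 : 0 ≤ B) (hB : ∀ w : H, ‖g' w - g w‖ ≤ B) (w₁ w₂ : H) :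
    ‖(w₁ - η • g w₁) - (w₂ - η • g' w₂)‖ ^ 2
      ≤ ‖w₁ - w₂‖ ^ 2 + 2 * η * B * ‖w₁ - w₂‖ + 2 * η ^ 2 * B ^ 2 := by
  set a := w₁ - w₂ with ha
  set u := g w₁ - g w₂ with hu
  set e := g' w₂ - g w₂ with he
  have hip : (0:ℝ) ≤ ⟪a, u⟫ := by
    have := hg w₁ w₂
    nlinarith [sq_nonneg ‖g w₁ - g w₂‖]
  have key : ‖a - η • u‖ ^ 2 ≤ ‖a‖ ^ 2 := by
    have hexp : ‖a - η • u‖ ^ 2 = ‖a‖ ^ 2 - 2 * η * ⟪a, u⟫ + η ^ 2 * ‖u‖ ^ 2 := by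
      rw [@norm_sub_sq_real]
      rw [real_inner_smul_right, norm_smul]
      simp [Real.norm_eq_abs, abs_of_pos hη0]
      ring
    have h2 : ‖u‖ ^ 2 ≤ β * ⟪a, u⟫ := hg w₁ w₂
    have hηβ : η * β ≤ 1 := by
      rw [le_div_iff₀ hβ] at hη; linarith
    nlinarith [mul_le_mul_of_nonneg_left h2 (sq_nonneg η),
      mul_nonneg hη0.le hip, mul_le_mul_of_nonneg_right hηβ (mul_nonneg hη0.le hip)]
  have hna : ‖a - η • u‖ ≤ ‖a‖ :=
    (pow_le_pow_iff_left₀ (norm_nonneg _) (norm_nonneg _) two_ne_zero).mp key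
  have hrw : (w₁ - η • g w₁) - (w₂ - η • g' w₂) = (a - η • u) + η • e := by
    simp only [ha, hu, he, smul_sub]
    abel
  rw [hrw]
  have hne : ‖η • e‖ ≤ η * B := by
    rw [norm_smul, Real.norm_eq_abs, abs_of_pos hη0]
    exact mul_le_mul_of_nonneg_left (hB w₂) hη0.le
  have htri : ‖(a - η • u) + η • e‖ ≤ ‖a‖ + η * B :=
    (norm_add_le _ _).trans (add_le_add hna hne)
  have hnn : (0:ℝ) ≤ ‖a‖ + η * B :=
    add_nonneg (norm_nonneg _) (mul_nonneg hη0.le hB0)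
  nlinarith [sq_nonneg (η * B), pow_le_pow_left₀ (norm_nonneg _) htri 2]
end

section
/- Let H = ℝ^d with the Euclidean inner product. Fix R ≥ 1, β > 0, and for each i = 1, …, R constants p_i ≥ 0, γ_i ≥ 0, τ_i ∈ ℕ, B_i ≥ 0, and 0 < η_i ≤ 1/β. For each i and each step s < τ_i let g_{i,s}, g'_{i,s} : H → H be maps such that each g_{i,s} is β-co-coercive and ‖g'_{i,s}(w) − g_{i,s}(w)‖ ≤ B_i for all w ∈ H. Fix w₀ ∈ H and u ∈ H. Define clean local iterates w^i_0 = w₀, w^i_{s+1} = w^i_s − η_i g_{i,s}(w^i_s), and poisoned local iterates v^i_0 = w₀, v^i_{s+1} = v^i_s − η_i g'_{i,s}(v^i_s). Set w = w₀ + u + Σ_{i=1}^R p_i γ_i (w^i_{τ_i} − w₀) and w' = w₀ + u + Σ_{i=1}^R p_i γ_i (v^i_{τ_i} − w₀). Then for any ρ > 0 and σ > 0: D_KL( N(Clip_ρ(w), σ²I) ‖ N(Clip_ρ(w'), σ²I) ) ≤ 2R · Σ_{i=1}^R (p_i γ_i τ_i η_i B_i)² / σ². -/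
open MeasureTheory ProbabilityTheory Real
open scoped Classical RealInnerProductSpace BigOperators

section Aux
open scoped ENNReal NNReal

lemma lintegral_pi_prod : ∀ {n : ℕ} (μ : Fin n → Measure ℝ),
    (∀ i, SigmaFinite (μ i)) → ∀ (f : Fin n → ℝ → ℝ≥0∞), (∀ i, Measurable (f i)) →
    ∫⁻ x, ∏ i, f i (x i) ∂Measure.pi μ = ∏ i, ∫⁻ t, f i t ∂μ i := by
  intro n
  induction n with
  | zero =>
    intro μ _ f hf
    haveI : ∀ i, SigmaFinite (μ i) := fun i => i.elim0
    simp [Measure.pi_univ]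
  | succ n ih =>
    intro μ hμ f hf
    haveI : ∀ i, SigmaFinite (μ i) := hμ
    have hmp := (measurePreserving_piFinSuccAbove μ 0)
    have hmeas : Measurable fun (z : ℝ × (Fin n → ℝ)) => f 0 z.1 * ∏ j, f (Fin.succ j) (z.2 j) := by
      exact ((hf 0).comp measurable_fst).mul
        (Finset.measurable_prod _ fun j _ => (hf _).comp ((measurable_pi_apply j).comp measurable_snd))
    have key := hmp.lintegral_comp hmeas
    have happ : ∀ x : Fin (n+1) → ℝ,
        (f 0 ((MeasurableEquiv.piFinSuccAbove (fun _ => ℝ) 0) x).1 *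
          ∏ j, f (Fin.succ j) (((MeasurableEquiv.piFinSuccAbove (fun _ => ℝ) 0) x).2 j))
        = ∏ i, f i (x i) := by
      intro x
      rw [Fin.prod_univ_succ]
      rfl
    calc ∫⁻ x, ∏ i, f i (x i) ∂Measure.pi μ
        = ∫⁻ x, (f 0 ((MeasurableEquiv.piFinSuccAbove (fun _ => ℝ) 0) x).1 *
          ∏ j, f (Fin.succ j) (((MeasurableEquiv.piFinSuccAbove (fun _ => ℝ) 0) x).2 j)) ∂Measure.pi μ := by
          apply lintegral_congr; intro x; rw [happ x]
      _ = ∫⁻ z, f 0 z.1 * ∏ j, f (Fin.succ j) (z.2 j)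
            ∂((μ 0).prod (Measure.pi fun j => μ (Fin.succAbove 0 j))) := key
      _ = (∫⁻ t, f 0 t ∂μ 0) * ∫⁻ y : Fin n → ℝ, (∏ j, f (Fin.succ j) (y j))
            ∂(Measure.pi fun j => μ (Fin.succAbove 0 j)) :=
          lintegral_prod_mul (f := f 0) (g := fun y : Fin n → ℝ => ∏ j, f (Fin.succ j) (y j))
            ((hf 0).aemeasurable)
            ((Finset.measurable_prod _ fun j _ => (hf _).comp (measurable_pi_apply j)).aemeasurable)
      _ = (∫⁻ t, f 0 t ∂μ 0) * ∏ j, ∫⁻ t, f (Fin.succ j) t ∂μ (Fin.succ j) := by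
          congr 1
          have hsa : (fun j => μ (Fin.succAbove 0 j)) = fun j : Fin n => μ (Fin.succ j) := by
            funext j; rw [Fin.zero_succAbove]
          rw [hsa]
          exact ih _ (fun j => hμ _) _ (fun j => hf _)
      _ = ∏ i, ∫⁻ t, f i t ∂μ i := (Fin.prod_univ_succ fun i => ∫⁻ t, f i t ∂μ i).symm

lemma map_eval_pi {n : ℕ} (μ : Fin n → Measure ℝ) [∀ i, IsProbabilityMeasure (μ i)]
    (i : Fin n) : (Measure.pi μ).map (Function.eval i) = μ i := by
  ext s hs
  rw [Measure.map_apply (measurable_pi_apply i) hs]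
  have hpre : Function.eval i ⁻¹' s
      = Set.pi Set.univ (Function.update (fun _ : Fin n => (Set.univ : Set ℝ)) i s) := by
    ext x
    simp [Function.update_apply, Function.eval]
  rw [hpre, Measure.pi_pi]
  have hterm : ∀ j : Fin n, μ j (Function.update (fun _ : Fin n => (Set.univ : Set ℝ)) i s j)
      = if j = i then μ i s else 1 := by
    intro j
    rcases eq_or_ne j i with rfl | hj
    · simp
    · simp [Function.update_apply, hj]
  rw [Finset.prod_congr rfl fun j _ => hterm j, Finset.prod_ite_eq' Finset.univ i
    (fun _ => μ i s)]
  simp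

lemma pi_gaussian_eq {n : ℕ} (m : Fin n → ℝ) (v : ℝ≥0) (hv : v ≠ 0) :
    Measure.pi (fun i => gaussianReal (m i) v)
      = (Measure.pi fun _ : Fin n => (volume : Measure ℝ)).withDensity
          (fun x => ∏ i, gaussianPDF (m i) v (x i)) := by
  refine Measure.pi_eq (μ := fun i => gaussianReal (m i) v) fun s hs => ?_
  rw [withDensity_apply _ (MeasurableSet.univ_pi hs), ← lintegral_indicator (MeasurableSet.univ_pi hs)]
  have hind : (Set.univ.pi s).indicator (fun x : Fin n → ℝ => ∏ i, gaussianPDF (m i) v (x i))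
      = fun x => ∏ i, (s i).indicator (gaussianPDF (m i) v) (x i) := by
    funext x
    by_cases hx : x ∈ Set.univ.pi s
    · rw [Set.indicator_of_mem hx]
      refine Finset.prod_congr rfl fun j _ => ?_
      rw [Set.indicator_of_mem (hx j (Set.mem_univ j))]
    · rw [Set.indicator_of_notMem hx]
      rw [Set.mem_univ_pi] at hx
      push_neg at hx
      obtain ⟨j, hj⟩ := hx
      exact (Finset.prod_eq_zero (Finset.mem_univ j)
        (by rw [Set.indicator_of_notMem hj])).symm
  rw [hind, lintegral_pi_prod _ (fun _ => inferInstance) _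
    (fun j => (measurable_gaussianPDF _ _).indicator (hs j))]
  refine Finset.prod_congr rfl fun j _ => ?_
  rw [lintegral_indicator (hs j) _, ← gaussianReal_apply _ hv]

lemma integrable_mul_gaussianPDFReal (μ : ℝ) (v : ℝ≥0) (hv : v ≠ 0) :
    Integrable (fun x => gaussianPDFReal μ v x * x) := by
  have hvpos : (0:ℝ) < v := lt_of_le_of_ne v.coe_nonneg (by exact_mod_cast hv.symm)
  have hb : (0:ℝ) < (2 * (v:ℝ))⁻¹ := by positivity
  have h0 : Integrable (fun y : ℝ => gaussianPDFReal 0 v y * y) := by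
    have h := (integrable_mul_exp_neg_mul_sq hb).const_mul (√(2 * Real.pi * v))⁻¹
    refine h.congr ?_
    filter_upwards with y
    simp only [gaussianPDFReal, sub_zero]
    rw [show -y^2/(2*(v:ℝ)) = -((2*(v:ℝ))⁻¹ * y^2) by field_simp]
    ring
  have hshift : Integrable (fun x : ℝ => gaussianPDFReal 0 v (x - μ) * (x - μ)) :=
    h0.comp_sub_right μ
  have hconst : Integrable (fun x : ℝ => gaussianPDFReal μ v x * μ) :=
    (integrable_gaussianPDFReal μ v).mul_const μ
  have : (fun x => gaussianPDFReal μ v x * x)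
      = fun x => gaussianPDFReal 0 v (x - μ) * (x - μ) + gaussianPDFReal μ v x * μ := by
    funext x
    simp only [gaussianPDFReal_sub, zero_add]
    ring
  rw [this]
  exact hshift.add hconst

lemma integral_mul_gaussianPDFReal (μ : ℝ) (v : ℝ≥0) (hv : v ≠ 0) :
    ∫ x, gaussianPDFReal μ v x * x = μ := by
  have h0 : (∫ y : ℝ, gaussianPDFReal 0 v y * y) = 0 := by
    have hodd : ∀ y : ℝ, gaussianPDFReal 0 v (-y) * (-y) = -(gaussianPDFReal 0 v y * y) := by
      intro y
      rw [show gaussianPDFReal 0 v (-y) = gaussianPDFReal 0 v y by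
        rw [gaussianPDFReal, gaussianPDFReal]; ring_nf]
      ring
    have := integral_neg_eq_self (fun y : ℝ => gaussianPDFReal 0 v y * y) volume
    rw [show (fun y : ℝ => gaussianPDFReal 0 v (-y) * (-y))
      = fun y : ℝ => -(gaussianPDFReal 0 v y * y) from funext hodd] at this
    rw [integral_neg] at this
    linarith
  calc ∫ x, gaussianPDFReal μ v x * x
      = ∫ x, gaussianPDFReal 0 v (x - μ) * (x - μ) + gaussianPDFReal μ v x * μ := by
        refine integral_congr_ae (Filter.Eventually.of_forall fun x => ?_)
        simp only [gaussianPDFReal_sub, zero_add]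
        ring
    _ = (∫ x, gaussianPDFReal 0 v (x - μ) * (x - μ)) + ∫ x, gaussianPDFReal μ v x * μ := by
        refine integral_add ((integrable_mul_gaussianPDFReal 0 v hv).comp_sub_right μ)
          ((integrable_gaussianPDFReal μ v).mul_const μ)
    _ = (∫ y, gaussianPDFReal 0 v y * y) + μ * ∫ x, gaussianPDFReal μ v x := by
        congr 1
        · exact integral_sub_right_eq_self (fun y => gaussianPDFReal 0 v y * y) μ
        · rw [integral_mul_const]; ring
    _ = μ := by rw [h0, integral_gaussianPDFReal_eq_one μ hv]; ring

lemma gaussianPDF_eq_toNNReal (μ : ℝ) (v : ℝ≥0) :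
    gaussianPDF μ v = fun x => ((Real.toNNReal (gaussianPDFReal μ v x) : ℝ≥0) : ℝ≥0∞) := rfl

lemma measurable_toNNReal_pdf (μ : ℝ) (v : ℝ≥0) :
    Measurable (fun x => Real.toNNReal (gaussianPDFReal μ v x)) :=
  measurable_real_toNNReal.comp (measurable_gaussianPDFReal μ v)

lemma integrable_id_gaussianReal (μ : ℝ) (v : ℝ≥0) (hv : v ≠ 0) :
    Integrable (fun x : ℝ => x) (gaussianReal μ v) := by
  rw [gaussianReal_of_var_ne_zero _ hv, gaussianPDF_eq_toNNReal,
    integrable_withDensity_iff_integrable_smul (measurable_toNNReal_pdf μ v)]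
  refine (integrable_mul_gaussianPDFReal μ v hv).congr ?_
  filter_upwards with x
  simp [NNReal.smul_def, Real.coe_toNNReal _ (gaussianPDFReal_nonneg μ v x)]

lemma integral_id_gaussianReal (μ : ℝ) (v : ℝ≥0) (hv : v ≠ 0) :
    ∫ x, x ∂(gaussianReal μ v) = μ := by
  rw [gaussianReal_of_var_ne_zero _ hv, gaussianPDF_eq_toNNReal,
    integral_withDensity_eq_integral_smul (measurable_toNNReal_pdf μ v)]
  calc ∫ x : ℝ, (Real.toNNReal (gaussianPDFReal μ v x)) • x
      = ∫ x : ℝ, gaussianPDFReal μ v x * x := by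
        refine integral_congr_ae (Filter.Eventually.of_forall fun x => ?_)
        simp [NNReal.smul_def, Real.coe_toNNReal _ (gaussianPDFReal_nonneg μ v x)]
    _ = μ := integral_mul_gaussianPDFReal μ v hv

lemma integrable_affine_gaussianReal (μ : ℝ) (v : ℝ≥0) (hv : v ≠ 0) (a c : ℝ) :
    Integrable (fun x : ℝ => a * x + c) (gaussianReal μ v) :=
  ((integrable_id_gaussianReal μ v hv).const_mul a).add (integrable_const c)

lemma integral_affine_gaussianReal (μ : ℝ) (v : ℝ≥0) (hv : v ≠ 0) (a c : ℝ) :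
    ∫ x, (a * x + c) ∂(gaussianReal μ v) = a * μ + c := by
  rw [integral_add ((integrable_id_gaussianReal μ v hv).const_mul a) (integrable_const c),
    integral_const_mul, integral_id_gaussianReal μ v hv]
  simp



lemma log_pdf_ratio (a b : ℝ) {σ : ℝ} (hσ : 0 < σ) (w : ℝ≥0) (hw : (w:ℝ) = σ^2) (t : ℝ) :
    Real.log (gaussianPDFReal a w t) - Real.log (gaussianPDFReal b w t)
    = (a - b)/σ^2 * t + (b^2 - a^2)/(2*σ^2) := by
  simp only [gaussianPDFReal]
  rw [hw]
  have hs : (0:ℝ) < √(2 * Real.pi * σ^2) := Real.sqrt_pos.mpr (by positivity)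
  have hc : (√(2 * Real.pi * σ^2))⁻¹ ≠ 0 := ne_of_gt (inv_pos.mpr hs)
  rw [Real.log_mul hc (Real.exp_ne_zero _), Real.log_mul hc (Real.exp_ne_zero _),
    Real.log_exp, Real.log_exp]
  have hσ2 : σ^2 ≠ 0 := by positivity
  field_simp
  ring

lemma klDiv_gaussianPi {d : ℕ} (m m' : EuclideanSpace ℝ (Fin d)) {σ : ℝ} (hσ : 0 < σ) :
    klDiv (gaussianPi m σ) (gaussianPi m' σ)
      = (((∑ i, (m i - m' i)^2) / (2*σ^2) : ℝ) : EReal) := by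
  have hσ2 : (0:ℝ) < σ^2 := by positivity
  have hv : (⟨σ^2, sq_nonneg σ⟩ : ℝ≥0) ≠ 0 := by
    intro h
    have : ((⟨σ^2, sq_nonneg σ⟩ : ℝ≥0) : ℝ) = 0 := by rw [h]; rfl
    rw [show ((⟨σ^2, sq_nonneg σ⟩ : ℝ≥0) : ℝ) = σ^2 from rfl] at this
    exact hσ2.ne' this
  set v : ℝ≥0 := ⟨σ^2, sq_nonneg σ⟩ with hvdef
  set P : Measure (Fin d → ℝ) := Measure.pi fun _ => volume with hP
  set F : (Fin d → ℝ) → ℝ≥0∞ := fun x => ∏ i, gaussianPDF (m i) v (x i) with hF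
  set G : (Fin d → ℝ) → ℝ≥0∞ := fun x => ∏ i, gaussianPDF (m' i) v (x i) with hG
  have hFmeas : Measurable F :=
    Finset.measurable_prod _ fun i _ => (measurable_gaussianPDF _ _).comp (measurable_pi_apply i)
  have hGmeas : Measurable G :=
    Finset.measurable_prod _ fun i _ => (measurable_gaussianPDF _ _).comp (measurable_pi_apply i)
  set μPi : Measure (Fin d → ℝ) := Measure.pi fun i => gaussianReal (m i) v with hμPi
  set νPi : Measure (Fin d → ℝ) := Measure.pi fun i => gaussianReal (m' i) v with hνPi
  have hμ : μPi = P.withDensity F := pi_gaussian_eq (fun i => m i) v hv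
  have hν : νPi = P.withDensity G := pi_gaussian_eq (fun i => m' i) v hv
  have hG0 : ∀ x, G x ≠ 0 := fun x =>
    Finset.prod_ne_zero_iff.mpr fun i _ => (gaussianPDF_pos _ hv _).ne'
  have hGtop : ∀ x, G x ≠ ⊤ := fun x =>
    (ENNReal.prod_lt_top fun i _ => ENNReal.ofReal_lt_top).ne
  set ratio : (Fin d → ℝ) → ℝ≥0∞ := fun x => F x / G x with hratio
  have hratio_meas : Measurable ratio := hFmeas.div hGmeas
  have hkey : μPi = νPi.withDensity ratio := by
    rw [hν, ← withDensity_mul _ hGmeas hratio_meas, hμ]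
    congr 1
    funext x
    exact (ENNReal.mul_div_cancel (hG0 x) (hGtop x)).symm
  have habs : μPi ≪ νPi := by
    rw [hkey]; exact withDensity_absolutelyContinuous νPi ratio
  have hrnν : μPi.rnDeriv νPi =ᵐ[νPi] ratio := by
    rw [hkey]; exact Measure.rnDeriv_withDensity νPi hratio_meas
  set e := (MeasurableEquiv.toLp 2 (Fin d → ℝ)).symm with he
  have hemb : MeasurableEmbedding (⇑e.symm) := e.symm.measurableEmbedding
  have hgm : gaussianPi m σ = μPi.map ⇑e.symm := rfl
  have hgm' : gaussianPi m' σ = νPi.map ⇑e.symm := rfl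
  have habsmap : gaussianPi m σ ≪ gaussianPi m' σ := by
    rw [hgm, hgm']; exact habs.map e.symm.measurable
  unfold klDiv
  rw [if_pos habsmap]
  congr 1
  -- now a real-number identity
  have hrnmap := hemb.rnDeriv_map μPi νPi
  have hrnμ : (fun x => (μPi.map ⇑e.symm).rnDeriv (νPi.map ⇑e.symm) (e.symm x)) =ᵐ[μPi] ratio :=
    ((hrnmap.trans hrnν).filter_mono habs.ae_le)
  have hsm : AEStronglyMeasurable
      (fun x => Real.log (((gaussianPi m σ).rnDeriv (gaussianPi m' σ) x).toReal))
      (gaussianPi m σ) :=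
    (Real.measurable_log.comp (Measure.measurable_rnDeriv _ _).ennreal_toReal).aestronglyMeasurable
  set φ : Fin d → ℝ → ℝ :=
    fun i t => (m i - m' i)/σ^2 * t + ((m' i)^2 - (m i)^2)/(2*σ^2) with hφ
  have hpdfpos : ∀ (a : ℝ) (t : ℝ), 0 < gaussianPDFReal a v t :=
    fun a t => gaussianPDFReal_pos a v t hv
  have hlogratio : ∀ y : Fin d → ℝ, Real.log ((ratio y).toReal) = ∑ i, φ i (y i) := by
    intro y
    have hFto : (F y).toReal = ∏ i, gaussianPDFReal (m i) v (y i) := by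
      rw [hF, ENNReal.toReal_prod]
      exact Finset.prod_congr rfl fun i _ => ENNReal.toReal_ofReal (gaussianPDFReal_nonneg _ _ _)
    have hGto : (G y).toReal = ∏ i, gaussianPDFReal (m' i) v (y i) := by
      rw [hG, ENNReal.toReal_prod]
      exact Finset.prod_congr rfl fun i _ => ENNReal.toReal_ofReal (gaussianPDFReal_nonneg _ _ _)
    have hFpos : (0:ℝ) < ∏ i, gaussianPDFReal (m i) v (y i) :=
      Finset.prod_pos fun i _ => hpdfpos _ _
    have hGpos : (0:ℝ) < ∏ i, gaussianPDFReal (m' i) v (y i) :=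
      Finset.prod_pos fun i _ => hpdfpos _ _
    rw [hratio, ENNReal.toReal_div, hFto, hGto, Real.log_div hFpos.ne' hGpos.ne',
      Real.log_prod (fun i _ => (hpdfpos _ _).ne'),
      Real.log_prod (fun i _ => (hpdfpos _ _).ne'), ← Finset.sum_sub_distrib]
    exact Finset.sum_congr rfl fun i _ => log_pdf_ratio (m i) (m' i) hσ v rfl (y i)
  have hφcont : ∀ i, Continuous (φ i) := by
    intro i
    exact ((continuous_const.mul continuous_id)).add continuous_const
  have hφint : ∀ i : Fin d, Integrable (fun y : Fin d → ℝ => φ i (y i)) μPi := by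
    intro i
    have h1 : Integrable (φ i) (gaussianReal (m i) v) :=
      integrable_affine_gaussianReal (m i) v hv _ _
    rw [← map_eval_pi (fun j => gaussianReal (m j) v) i] at h1
    exact (integrable_map_measure ((hφcont i).aestronglyMeasurable)
      (measurable_pi_apply i).aemeasurable).1 h1
  have hφval : ∀ i : Fin d, ∫ t, φ i t ∂(gaussianReal (m i) v) = (m i - m' i)^2/(2*σ^2) := by
    intro i
    rw [hφ]
    rw [integral_affine_gaussianReal (m i) v hv _ _]
    field_simp
    ring
  calc ∫ x, Real.log (((gaussianPi m σ).rnDeriv (gaussianPi m' σ) x).toReal)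
        ∂(gaussianPi m σ)
      = ∫ y, Real.log (((gaussianPi m σ).rnDeriv (gaussianPi m' σ) (e.symm y)).toReal) ∂μPi := by
        rw [hgm]
        exact integral_map e.symm.measurable.aemeasurable (hgm ▸ hsm)
    _ = ∫ y, Real.log ((ratio y).toReal) ∂μPi := by
        refine integral_congr_ae ?_
        filter_upwards [hrnμ] with y hy
        rw [hgm, hgm', hy]
    _ = ∫ y, (∑ i, φ i (y i)) ∂μPi := by
        refine integral_congr_ae (Filter.Eventually.of_forall fun y => ?_)
        exact hlogratio y
    _ = ∑ i, ∫ y, φ i (y i) ∂μPi := integral_finset_sum _ fun i _ => hφint i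
    _ = ∑ i, ∫ t, φ i t ∂(gaussianReal (m i) v) := by
        refine Finset.sum_congr rfl fun i _ => ?_
        rw [← map_eval_pi (fun j => gaussianReal (m j) v) i,
          integral_map (measurable_pi_apply i).aemeasurable
            ((hφcont i).aestronglyMeasurable)]
    _ = ∑ i, (m i - m' i)^2/(2*σ^2) := Finset.sum_congr rfl fun i _ => hφval i
    _ = (∑ i, (m i - m' i)^2) / (2*σ^2) := by rw [Finset.sum_div]

section VecAux
variable {H : Type*} [NormedAddCommGroup H] [InnerProductSpace ℝ H]

lemma clip_lipschitz (ρ : ℝ) (hρ : 0 < ρ) (x y : H) :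
    ‖clip ρ x - clip ρ y‖ ≤ ‖x - y‖ := by
  set a := ‖x‖ with ha
  set b := ‖y‖ with hb
  have ha0 : 0 ≤ a := norm_nonneg x
  have hb0 : 0 ≤ b := norm_nonneg y
  set s := (max 1 (a / ρ))⁻¹ with hs
  set t := (max 1 (b / ρ))⁻¹ with ht
  have hs1 : s ≤ 1 := by
    rw [hs]; exact inv_le_one_of_one_le₀ (le_max_left _ _)
  have ht1 : t ≤ 1 := by
    rw [ht]; exact inv_le_one_of_one_le₀ (le_max_left _ _)
  have hs0 : 0 < s := by positivity
  have ht0 : 0 < t := by positivity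
  have hsa : s * a = min a ρ := by
    rcases le_or_gt a ρ with h | h
    · have : a / ρ ≤ 1 := (div_le_one hρ).2 h
      simp [hs, max_eq_left this, min_eq_left h]
    · have h1 : (1:ℝ) ≤ a / ρ := le_of_lt ((one_lt_div hρ).2 h)
      have hane : a ≠ 0 := (lt_trans hρ h).ne'
      rw [hs, max_eq_right h1, min_eq_right (le_of_lt h)]
      field_simp
  have htb : t * b = min b ρ := by
    rcases le_or_gt b ρ with h | h
    · have : b / ρ ≤ 1 := (div_le_one hρ).2 h
      simp [ht, max_eq_left this, min_eq_left h]
    · have h1 : (1:ℝ) ≤ b / ρ := le_of_lt ((one_lt_div hρ).2 h)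
      have hbne : b ≠ 0 := (lt_trans hρ h).ne'
      rw [ht, max_eq_right h1, min_eq_right (le_of_lt h)]
      field_simp
  have hmin : (s*a - t*b)^2 ≤ (a - b)^2 := by
    rw [hsa, htb]
    rcases le_or_gt a ρ with h1 | h1 <;> rcases le_or_gt b ρ with h2 | h2
    · rw [min_eq_left h1, min_eq_left h2]
    · rw [min_eq_left h1, min_eq_right (le_of_lt h2)]
      nlinarith [sq_nonneg (b - ρ), mul_nonneg (sub_nonneg.2 h1) (sub_nonneg.2 (le_of_lt h2))]
    · rw [min_eq_right (le_of_lt h1), min_eq_left h2]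
      nlinarith [sq_nonneg (a - ρ), mul_nonneg (sub_nonneg.2 h2) (sub_nonneg.2 (le_of_lt h1))]
    · rw [min_eq_right (le_of_lt h1), min_eq_right (le_of_lt h2)]
      simp [sq_nonneg (a - b)]
  have hinner : ⟪x, y⟫ ≤ a * b := real_inner_le_norm x y
  have hst : s * t ≤ 1 := mul_le_one₀ hs1 ht0.le ht1
  have hprod : 0 ≤ (1 - s*t) * (a*b - ⟪x,y⟫) :=
    mul_nonneg (by linarith) (by linarith)
  have hsq : ‖clip ρ x - clip ρ y‖^2 ≤ ‖x - y‖^2 := by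
    have e1 : ‖clip ρ x - clip ρ y‖^2 = s^2*a^2 - 2*(s*t)*⟪x,y⟫ + t^2*b^2 := by
      show ‖s • x - t • y‖^2 = _
      rw [@norm_sub_sq_real, inner_smul_left, inner_smul_right, norm_smul, norm_smul]
      simp only [Real.norm_eq_abs, abs_of_pos hs0, abs_of_pos ht0, starRingEnd_apply, star_trivial]
      ring
    have e2 : ‖x - y‖^2 = a^2 - 2*⟪x,y⟫ + b^2 := by
      rw [@norm_sub_sq_real]
    rw [e1, e2]
    nlinarith [hmin, hprod]
  exact (pow_le_pow_iff_left₀ (norm_nonneg _) (norm_nonneg _) (two_ne_zero)).1 hsq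

lemma step_nonexpansive {β η : ℝ} (hβ : 0 < β) (hη0 : 0 < η) (hη : η ≤ 1/β)
    (G : H → H) (hco : ∀ w₁ w₂, ‖G w₁ - G w₂‖^2 ≤ β * ⟪w₁ - w₂, G w₁ - G w₂⟫)
    (x y : H) : ‖(x - η • G x) - (y - η • G y)‖ ≤ ‖x - y‖ := by
  have hβη : η * β ≤ 1 := by
    rw [div_eq_mul_inv, one_mul] at hη
    calc η * β ≤ β⁻¹ * β := by apply mul_le_mul_of_nonneg_right hη hβ.le
    _ = 1 := inv_mul_cancel₀ hβ.ne'
  set X := x - y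
  set D := G x - G y
  have hco' : ‖D‖^2 ≤ β * ⟪X, D⟫ := hco x y
  have hc : 0 ≤ ⟪X, D⟫ := by nlinarith [sq_nonneg ‖D‖]
  have h1 : η^2 * ‖D‖^2 ≤ η^2 * (β * ⟪X, D⟫) :=
    mul_le_mul_of_nonneg_left hco' (sq_nonneg η)
  have h2 : (η * β) * (η * ⟪X, D⟫) ≤ 1 * (η * ⟪X, D⟫) :=
    mul_le_mul_of_nonneg_right hβη (mul_nonneg hη0.le hc)
  have key : ‖X - η • D‖^2 ≤ ‖X‖^2 := by
    rw [@norm_sub_sq_real, inner_smul_right, norm_smul, Real.norm_eq_abs,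
      abs_of_pos hη0, mul_pow]
    nlinarith [h1, h2, mul_nonneg hη0.le hc]
  have heq : (x - η • G x) - (y - η • G y) = X - η • D := by
    simp only [X, D, smul_sub]; abel
  rw [heq]
  exact (pow_le_pow_iff_left₀ (norm_nonneg _) (norm_nonneg _) two_ne_zero).1 key

lemma iterate_diff {β : ℝ} (hβ : 0 < β) {η Bc : ℝ} (hη0 : 0 < η) (hη : η ≤ 1/β)
    (hB : 0 ≤ Bc) {τ : ℕ} (g g' : ℕ → H → H)
    (hco : ∀ s < τ, ∀ w₁ w₂ : H, ‖g s w₁ - g s w₂‖^2 ≤ β * ⟪w₁ - w₂, g s w₁ - g s w₂⟫)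
    (hdev : ∀ s < τ, ∀ w : H, ‖g' s w - g s w‖ ≤ Bc)
    (W V : ℕ → H) (h0 : W 0 = V 0)
    (hWs : ∀ s < τ, W (s + 1) = W s - η • g s (W s))
    (hVs : ∀ s < τ, V (s + 1) = V s - η • g' s (V s)) :
    ∀ s ≤ τ, ‖W s - V s‖ ≤ s * η * Bc := by
  intro s hs
  induction s with
  | zero => simp [h0]
  | succ n ih =>
    have hnτ : n < τ := Nat.lt_of_succ_le hs
    have ihn := ih (le_of_lt hnτ)
    rw [hWs n hnτ, hVs n hnτ]
    have hdecomp : (W n - η • g n (W n)) - (V n - η • g' n (V n))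
        = ((W n - η • g n (W n)) - (V n - η • g n (V n))) + η • (g' n (V n) - g n (V n)) := by
      simp only [smul_sub]; abel
    rw [hdecomp]
    calc ‖_ + _‖ ≤ ‖(W n - η • g n (W n)) - (V n - η • g n (V n))‖
          + ‖η • (g' n (V n) - g n (V n))‖ := norm_add_le _ _
    _ ≤ ‖W n - V n‖ + η * Bc := by
        gcongr
        · exact step_nonexpansive hβ hη0 hη (g n) (hco n hnτ) _ _
        · rw [norm_smul, Real.norm_eq_abs, abs_of_pos hη0]
          exact mul_le_mul_of_nonneg_left (hdev n hnτ _) hη0.le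
    _ ≤ n * η * Bc + η * Bc := by linarith
    _ = (n + 1 : ℕ) * η * Bc := by push_cast; ring

end VecAux
end Aux

theorem kl_bound_attack_round (d R : ℕ) (hd : 1 ≤ d) (hR : 1 ≤ R)
    (β : ℝ) (hβ : 0 < β)
    (p γ η B : Fin R → ℝ) (τ : Fin R → ℕ)
    (hp : ∀ i, 0 ≤ p i) (hγ : ∀ i, 0 ≤ γ i) (hB0 : ∀ i, 0 ≤ B i)
    (hη0 : ∀ i, 0 < η i) (hη : ∀ i, η i ≤ 1 / β)
    (g g' : Fin R → ℕ → EuclideanSpace ℝ (Fin d) → EuclideanSpace ℝ (Fin d))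
    (hcoco : ∀ i, ∀ s < τ i, ∀ w₁ w₂ : EuclideanSpace ℝ (Fin d),
      ‖g i s w₁ - g i s w₂‖ ^ 2 ≤ β * ⟪w₁ - w₂, g i s w₁ - g i s w₂⟫)
    (hdev : ∀ i, ∀ s < τ i, ∀ w : EuclideanSpace ℝ (Fin d), ‖g' i s w - g i s w‖ ≤ B i)
    (w₀ u : EuclideanSpace ℝ (Fin d))
    (W V : Fin R → ℕ → EuclideanSpace ℝ (Fin d))
    (hW0 : ∀ i, W i 0 = w₀) (hV0 : ∀ i, V i 0 = w₀)
    (hWs : ∀ i, ∀ s < τ i, W i (s + 1) = W i s - η i • g i s (W i s))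
    (hVs : ∀ i, ∀ s < τ i, V i (s + 1) = V i s - η i • g' i s (V i s))
    (w w' : EuclideanSpace ℝ (Fin d))
    (hw : w = w₀ + u + ∑ i : Fin R, (p i * γ i) • (W i (τ i) - w₀))
    (hw' : w' = w₀ + u + ∑ i : Fin R, (p i * γ i) • (V i (τ i) - w₀))
    (ρ σ : ℝ) (hρ : 0 < ρ) (hσ : 0 < σ) :
    klDiv (gaussianPi (clip ρ w) σ) (gaussianPi (clip ρ w') σ)
      ≤ ((2 * (R : ℝ) * (∑ i : Fin R, (p i * γ i * (τ i : ℝ) * η i * B i) ^ 2) / σ ^ 2 : ℝ)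
          : EReal) := by
  -- KL equals the explicit quadratic form
  rw [show klDiv (gaussianPi (clip ρ w) σ) (gaussianPi (clip ρ w') σ)
      = (((∑ i, ((clip ρ w) i - (clip ρ w') i)^2) / (2*σ^2) : ℝ) : EReal)
    from klDiv_gaussianPi (clip ρ w) (clip ρ w') hσ]
  rw [EReal.coe_le_coe_iff]
  set T : Fin R → ℝ := fun i => p i * γ i * (τ i : ℝ) * η i * B i with hT
  have hT0 : ∀ i, 0 ≤ T i := fun i =>
    mul_nonneg (mul_nonneg (mul_nonneg (mul_nonneg (hp i) (hγ i)) (Nat.cast_nonneg _))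
      (hη0 i).le) (hB0 i)
  have hWV : ∀ i, ‖W i (τ i) - V i (τ i)‖ ≤ (τ i : ℝ) * η i * B i := fun i =>
    iterate_diff hβ (hη0 i) (hη i) (hB0 i) (g i) (g' i) (hcoco i) (hdev i) (W i) (V i)
      (by rw [hW0 i, hV0 i]) (hWs i) (hVs i) (τ i) le_rfl
  have hww' : w - w' = ∑ i, (p i * γ i) • (W i (τ i) - V i (τ i)) := by
    rw [hw, hw']
    rw [show (w₀ + u + ∑ i : Fin R, (p i * γ i) • (W i (τ i) - w₀))
        - (w₀ + u + ∑ i : Fin R, (p i * γ i) • (V i (τ i) - w₀))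
        = (∑ i : Fin R, (p i * γ i) • (W i (τ i) - w₀))
          - (∑ i : Fin R, (p i * γ i) • (V i (τ i) - w₀)) by abel]
    rw [← Finset.sum_sub_distrib]
    refine Finset.sum_congr rfl fun i _ => ?_
    rw [← smul_sub]
    congr 1
    abel
  have hnorm : ‖w - w'‖ ≤ ∑ i, T i := by
    rw [hww']
    calc ‖∑ i, (p i * γ i) • (W i (τ i) - V i (τ i))‖
        ≤ ∑ i, ‖(p i * γ i) • (W i (τ i) - V i (τ i))‖ := norm_sum_le _ _
      _ ≤ ∑ i, T i := by
          refine Finset.sum_le_sum fun i _ => ?_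
          rw [norm_smul, Real.norm_eq_abs, abs_of_nonneg (mul_nonneg (hp i) (hγ i)), hT]
          calc p i * γ i * ‖W i (τ i) - V i (τ i)‖
              ≤ p i * γ i * ((τ i : ℝ) * η i * B i) :=
                mul_le_mul_of_nonneg_left (hWV i) (mul_nonneg (hp i) (hγ i))
            _ = p i * γ i * (τ i : ℝ) * η i * B i := by ring
  have hclip : ‖clip ρ w - clip ρ w'‖ ≤ ∑ i, T i :=
    le_trans (clip_lipschitz ρ hρ w w') hnorm
  have hsumeq : ∑ i, ((clip ρ w) i - (clip ρ w') i)^2 = ‖clip ρ w - clip ρ w'‖^2 := by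
    rw [EuclideanSpace.norm_eq, Real.sq_sqrt (Finset.sum_nonneg fun i _ => sq_nonneg _)]
    refine Finset.sum_congr rfl fun i _ => ?_
    rw [show (clip ρ w - clip ρ w') i = (clip ρ w) i - (clip ρ w') i from rfl,
      Real.norm_eq_abs, sq_abs]
  have hCS : (∑ i, T i)^2 ≤ (R : ℝ) * ∑ i, (T i)^2 := by
    have h := sq_sum_le_card_mul_sum_sq (s := (Finset.univ : Finset (Fin R))) (f := T)
    simpa using h
  have hbound : ∑ i, ((clip ρ w) i - (clip ρ w') i)^2 ≤ (R : ℝ) * ∑ i, (T i)^2 := by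
    rw [hsumeq]
    calc ‖clip ρ w - clip ρ w'‖^2 ≤ (∑ i, T i)^2 :=
          pow_le_pow_left₀ (norm_nonneg _) hclip 2
      _ ≤ (R : ℝ) * ∑ i, (T i)^2 := hCS
  have hσ2 : (0:ℝ) < σ^2 := by positivity
  have hsum2 : (0:ℝ) ≤ ∑ i, (T i)^2 := Finset.sum_nonneg fun i _ => sq_nonneg _
  have hRpos : (0:ℝ) ≤ (R : ℝ) := Nat.cast_nonneg R
  rw [div_le_div_iff₀ (by positivity) hσ2]
  nlinarith [mul_le_mul_of_nonneg_right hbound hσ2.le,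
    mul_nonneg (mul_nonneg hRpos hsum2) hσ2.le]
end

section
/- Let X and Y be measurable spaces and K a Markov kernel from X to Y. Set η_TV(K) = sup over x₁, x₂ ∈ X of D_TV(K(x₁), K(x₂)). Then for all probability measures μ, ν on X: D_TV(μK, νK) ≤ η_TV(K) · D_TV(μ, ν). -/
open MeasureTheory ProbabilityTheory Real
open scoped Classical RealInnerProductSpace BigOperators

lemma tv_bdd {Ω : Type*} [MeasurableSpace Ω] (μ ν : Measure Ω)
    [IsProbabilityMeasure μ] [IsProbabilityMeasure ν] :
    BddAbove (Set.range fun A : {s : Set Ω // MeasurableSet s} =>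
      |(μ A.1).toReal - (ν A.1).toReal|) := by
  refine ⟨1, ?_⟩
  rintro r ⟨A, rfl⟩
  have h1 : (μ A.1).toReal ≤ 1 := by
    have := ENNReal.toReal_mono ENNReal.one_ne_top (prob_le_one (μ := μ) (s := A.1))
    simpa using this
  have h2 : (ν A.1).toReal ≤ 1 := by
    have := ENNReal.toReal_mono ENNReal.one_ne_top (prob_le_one (μ := ν) (s := A.1))
    simpa using this
  have h3 : 0 ≤ (μ A.1).toReal := ENNReal.toReal_nonneg
  have h4 : 0 ≤ (ν A.1).toReal := ENNReal.toReal_nonneg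
  rw [abs_sub_le_iff]
  constructor <;> linarith

lemma term_le_tvDist {Ω : Type*} [MeasurableSpace Ω] (μ ν : Measure Ω)
    [IsProbabilityMeasure μ] [IsProbabilityMeasure ν] {A : Set Ω} (hA : MeasurableSet A) :
    |(μ A).toReal - (ν A).toReal| ≤ tvDist μ ν :=
  le_ciSup (tv_bdd μ ν) (⟨A, hA⟩ : {s : Set Ω // MeasurableSet s})

lemma tvDist_nonneg' {Ω : Type*} [MeasurableSpace Ω] (μ ν : Measure Ω)
    [IsProbabilityMeasure μ] [IsProbabilityMeasure ν] : 0 ≤ tvDist μ ν :=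
  (abs_nonneg _).trans (term_le_tvDist μ ν MeasurableSet.empty)

lemma tvDist_le_one' {Ω : Type*} [MeasurableSpace Ω] (μ ν : Measure Ω)
    [IsProbabilityMeasure μ] [IsProbabilityMeasure ν] : tvDist μ ν ≤ 1 := by
  refine ciSup_le fun A => ?_
  obtain ⟨c, hc⟩ := tv_bdd μ ν
  -- direct bound
  have h1 : (μ A.1).toReal ≤ 1 := by
    have := ENNReal.toReal_mono ENNReal.one_ne_top (prob_le_one (μ := μ) (s := A.1))
    simpa using this
  have h2 : (ν A.1).toReal ≤ 1 := by
    have := ENNReal.toReal_mono ENNReal.one_ne_top (prob_le_one (μ := ν) (s := A.1))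
    simpa using this
  have h3 : 0 ≤ (μ A.1).toReal := ENNReal.toReal_nonneg
  have h4 : 0 ≤ (ν A.1).toReal := ENNReal.toReal_nonneg
  rw [abs_sub_le_iff]; constructor <;> linarith

lemma integral_sub_integral_le_aux {X : Type*} [MeasurableSpace X] (α β : Measure X)
    [IsProbabilityMeasure α] [IsProbabilityMeasure β] (f : X → ℝ)
    (hint_a : Integrable f α) (hint_b : Integrable f β) (η : ℝ)
    (h : ∀ x y, f x - f y ≤ η) : ∫ x, f x ∂α - ∫ x, f x ∂β ≤ η := by
  have h1 : ∀ y, ∫ x, f x ∂α ≤ f y + η := by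
    intro y
    calc ∫ x, f x ∂α ≤ ∫ _, (f y + η) ∂α :=
          integral_mono hint_a (integrable_const _) (fun x => by linarith [h x y])
      _ = f y + η := by simp
  have h2 : ∫ _, (∫ z, f z ∂α - η) ∂β ≤ ∫ y, f y ∂β :=
    integral_mono (integrable_const _) hint_b (fun y => by linarith [h1 y])
  simp at h2
  linarith

theorem tv_dobrushin_contraction {X Y : Type*} [MeasurableSpace X] [MeasurableSpace Y]
    (K : Kernel X Y) [IsMarkovKernel K]
    (μ ν : Measure X) [IsProbabilityMeasure μ] [IsProbabilityMeasure ν] :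
    tvDist (μ.bind K) (ν.bind K)
      ≤ (⨆ x₁ : X, ⨆ x₂ : X, tvDist (K x₁) (K x₂)) * tvDist μ ν := by
  have hX : Nonempty X := by
    by_contra h
    rw [not_nonempty_iff] at h
    have h0 : μ Set.univ = 0 := by
      rw [Set.univ_eq_empty_iff.2 h]; exact measure_empty
    rw [measure_univ] at h0
    exact one_ne_zero h0
  set η := ⨆ x₁ : X, ⨆ x₂ : X, tvDist (K x₁) (K x₂) with hηdef
  have hinner_bdd : ∀ x₁ : X, BddAbove (Set.range fun x₂ => tvDist (K x₁) (K x₂)) := by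
    intro x₁
    refine ⟨1, ?_⟩
    rintro r ⟨x₂, rfl⟩
    exact tvDist_le_one' _ _
  have houter_bdd : BddAbove (Set.range fun x₁ => ⨆ x₂, tvDist (K x₁) (K x₂)) := by
    refine ⟨1, ?_⟩
    rintro r ⟨x₁, rfl⟩
    exact ciSup_le fun x₂ => tvDist_le_one' _ _
  have hηxy : ∀ x₁ x₂ : X, tvDist (K x₁) (K x₂) ≤ η := fun x₁ x₂ =>
    (le_ciSup (hinner_bdd x₁) x₂).trans (le_ciSup houter_bdd x₁)
  have hη0 : 0 ≤ η := hX.elim fun x => (tvDist_nonneg' (K x) (K x)).trans (hηxy x x)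
  have hD0 : 0 ≤ tvDist μ ν := tvDist_nonneg' μ ν
  show (⨆ A : {s : Set Y // MeasurableSet s},
      |((μ.bind K) A.1).toReal - ((ν.bind K) A.1).toReal|) ≤ η * tvDist μ ν
  refine ciSup_le ?_
  rintro ⟨A, hA⟩
  set f : X → ℝ := fun x => ((K x) A).toReal with hfdef
  have hfm : Measurable f := (Kernel.measurable_coe K hA).ennreal_toReal
  have hf0 : ∀ x, 0 ≤ f x := fun x => ENNReal.toReal_nonneg
  have hf1 : ∀ x, f x ≤ 1 := by
    intro x
    have := ENNReal.toReal_mono ENNReal.one_ne_top (prob_le_one (μ := K x) (s := A))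
    simpa using this
  have hfint : ∀ (ρ : Measure X) [IsFiniteMeasure ρ], Integrable f ρ := by
    intro ρ _
    refine ⟨hfm.aestronglyMeasurable, HasFiniteIntegral.of_bounded (C := 1) ?_⟩
    refine ae_of_all _ fun x => ?_
    rw [Real.norm_eq_abs, abs_of_nonneg (hf0 x)]
    exact hf1 x
  have hbind : ∀ (ρ : Measure X), IsProbabilityMeasure ρ →
      ((ρ.bind K) A).toReal = ∫ x, f x ∂ρ := by
    intro ρ _
    rw [Measure.bind_apply hA K.measurable.aemeasurable]
    rw [← integral_toReal (Kernel.measurable_coe K hA).aemeasurable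
      (ae_of_all _ fun x => lt_of_le_of_lt (prob_le_one) ENNReal.one_lt_top)]
  obtain ⟨S, hSm, hS1, hS2⟩ := hahn_decomposition (μ := μ) (ν := ν)
  have hle1 : ν.restrict S ≤ μ.restrict S := by
    refine Measure.le_iff.2 fun B hB => ?_
    rw [Measure.restrict_apply hB, Measure.restrict_apply hB]
    exact hS1 _ (hB.inter hSm) Set.inter_subset_right
  have hle2 : μ.restrict Sᶜ ≤ ν.restrict Sᶜ := by
    refine Measure.le_iff.2 fun B hB => ?_
    rw [Measure.restrict_apply hB, Measure.restrict_apply hB]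
    exact hS2 _ (hB.inter hSm.compl) Set.inter_subset_right
  set πp := μ.restrict S - ν.restrict S with hπp
  set πm := ν.restrict Sᶜ - μ.restrict Sᶜ with hπm
  haveI hfinp : IsFiniteMeasure πp :=
    isFiniteMeasure_of_le (μ.restrict S) Measure.sub_le
  haveI hfinm : IsFiniteMeasure πm :=
    isFiniteMeasure_of_le (ν.restrict Sᶜ) Measure.sub_le
  have hμdec : ∫ x, f x ∂μ = ∫ x, f x ∂πp + ∫ x, f x ∂(ν.restrict S)
      + ∫ x, f x ∂(μ.restrict Sᶜ) := by
    conv_lhs => rw [← Measure.restrict_add_restrict_compl (μ := μ) hSm]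
    rw [integral_add_measure (hfint _) (hfint _)]
    congr 1
    conv_lhs => rw [← Measure.sub_add_cancel_of_le hle1]
    rw [integral_add_measure (hfint _) (hfint _)]
  have hνdec : ∫ x, f x ∂ν = ∫ x, f x ∂(ν.restrict S) + ∫ x, f x ∂πm
      + ∫ x, f x ∂(μ.restrict Sᶜ) := by
    conv_lhs => rw [← Measure.restrict_add_restrict_compl (μ := ν) hSm]
    rw [integral_add_measure (hfint _) (hfint _)]
    have : ∫ x, f x ∂(ν.restrict Sᶜ) = ∫ x, f x ∂πm + ∫ x, f x ∂(μ.restrict Sᶜ) := by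
      conv_lhs => rw [← Measure.sub_add_cancel_of_le hle2]
      rw [integral_add_measure (hfint _) (hfint _)]
    rw [this]; ring
  have hkey : ∫ x, f x ∂μ - ∫ x, f x ∂ν = ∫ x, f x ∂πp - ∫ x, f x ∂πm := by
    rw [hμdec, hνdec]; ring
  have hνS_le : ν S ≤ μ S := hS1 S hSm subset_rfl
  have hμSc_le : μ Sᶜ ≤ ν Sᶜ := hS2 Sᶜ hSm.compl subset_rfl
  have hπp_univ : πp Set.univ = μ S - ν S := by
    rw [hπp, Measure.sub_apply MeasurableSet.univ hle1,
      Measure.restrict_apply MeasurableSet.univ, Measure.restrict_apply MeasurableSet.univ,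
      Set.univ_inter]
  have hπm_univ : πm Set.univ = ν Sᶜ - μ Sᶜ := by
    rw [hπm, Measure.sub_apply MeasurableSet.univ hle2,
      Measure.restrict_apply MeasurableSet.univ, Measure.restrict_apply MeasurableSet.univ,
      Set.univ_inter]
  have hsum_μ : (μ S).toReal + (μ Sᶜ).toReal = 1 := by
    rw [← ENNReal.toReal_add (measure_ne_top _ _) (measure_ne_top _ _),
      measure_add_measure_compl hSm, measure_univ, ENNReal.toReal_one]
  have hsum_ν : (ν S).toReal + (ν Sᶜ).toReal = 1 := by
    rw [← ENNReal.toReal_add (measure_ne_top _ _) (measure_ne_top _ _),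
      measure_add_measure_compl hSm, measure_univ, ENNReal.toReal_one]
  rw [hbind μ inferInstance, hbind ν inferInstance, hkey]
  by_cases hp : μ S = ν S
  · -- degenerate case: both πp and πm are zero measures
    have hπp0 : πp = 0 := by
      refine Measure.measure_univ_eq_zero.1 ?_
      rw [hπp_univ, hp, tsub_self]
    have hπm0 : πm = 0 := by
      refine Measure.measure_univ_eq_zero.1 ?_
      rw [hπm_univ]
      have : ν Sᶜ = μ Sᶜ := by
        have e1 := prob_compl_eq_one_sub (μ := μ) hSm
        have e2 := prob_compl_eq_one_sub (μ := ν) hSm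
        rw [e1, e2, hp]
      rw [this, tsub_self]
    rw [hπp0, hπm0]
    simp [mul_nonneg hη0 hD0]
  · set p : ENNReal := μ S - ν S with hpdef
    have hp0 : p ≠ 0 := by
      rw [hpdef]
      intro hc
      exact hp (le_antisymm (tsub_eq_zero_iff_le.1 hc) hνS_le)
    have hpt : p ≠ ⊤ := by
      rw [hpdef]
      exact ENNReal.sub_ne_top (measure_ne_top _ _)
    have hpreal : p.toReal = (μ S).toReal - (ν S).toReal := by
      rw [hpdef, ENNReal.toReal_sub_of_le hνS_le (measure_ne_top _ _)]
    have hπm_mass : πm Set.univ = p := by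
      rw [hπm_univ, hpdef]
      rw [← ENNReal.toReal_eq_toReal_iff' (ENNReal.sub_ne_top (measure_ne_top _ _))
        (ENNReal.sub_ne_top (measure_ne_top _ _)),
        ENNReal.toReal_sub_of_le hμSc_le (measure_ne_top _ _),
        ENNReal.toReal_sub_of_le hνS_le (measure_ne_top _ _)]
      linarith
    set α : Measure X := p⁻¹ • πp with hαdef
    set β : Measure X := p⁻¹ • πm with hβdef
    haveI : IsProbabilityMeasure α := by
      constructor
      rw [hαdef, Measure.smul_apply, hπp_univ, smul_eq_mul,
        ENNReal.inv_mul_cancel hp0 hpt]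
    haveI : IsProbabilityMeasure β := by
      constructor
      rw [hβdef, Measure.smul_apply, hπm_mass, smul_eq_mul,
        ENNReal.inv_mul_cancel hp0 hpt]
    have hptr0 : p.toReal ≠ 0 := ENNReal.toReal_ne_zero.2 ⟨hp0, hpt⟩
    have hptr_pos : 0 ≤ p.toReal := ENNReal.toReal_nonneg
    have hip : ∫ x, f x ∂πp = p.toReal * ∫ x, f x ∂α := by
      rw [hαdef, integral_smul_measure, ENNReal.toReal_inv, smul_eq_mul, ← mul_assoc,
        mul_inv_cancel₀ hptr0, one_mul]
    have him : ∫ x, f x ∂πm = p.toReal * ∫ x, f x ∂β := by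
      rw [hβdef, integral_smul_measure, ENNReal.toReal_inv, smul_eq_mul, ← mul_assoc,
        mul_inv_cancel₀ hptr0, one_mul]
    have hxy : ∀ x y : X, f x - f y ≤ η := by
      intro x y
      refine (le_abs_self _).trans ?_
      exact (le_ciSup (tv_bdd (K x) (K y)) (⟨A, hA⟩ : {s : Set Y // MeasurableSet s})).trans
        (hηxy x y)
    have hcore : |∫ x, f x ∂α - ∫ x, f x ∂β| ≤ η := by
      rw [abs_sub_le_iff]
      exact ⟨integral_sub_integral_le_aux α β f (hfint _) (hfint _) η hxy,
        by simpa [abs_sub_comm] using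
          integral_sub_integral_le_aux β α f (hfint _) (hfint _) η (fun x y => hxy x y)⟩
    have htD : p.toReal ≤ tvDist μ ν := by
      rw [hpreal]
      exact (le_abs_self _).trans (term_le_tvDist μ ν hSm)
    rw [hip, him, ← mul_sub, abs_mul, abs_of_nonneg hptr_pos]
    calc p.toReal * |∫ x, f x ∂α - ∫ x, f x ∂β| ≤ p.toReal * η :=
          mul_le_mul_of_nonneg_left hcore hptr_pos
      _ ≤ tvDist μ ν * η := mul_le_mul_of_nonneg_right htD hη0
      _ = η * tvDist μ ν := mul_comm _ _
end

section
/- Let d, C ≥ 1, let W be a real d × C matrix with Frobenius norm ‖W‖_F ≤ ρ for some ρ ≥ 0, and fix a class y ∈ {1, …, C} with one-hot row vector Y ∈ ℝ^C (Y_i = 1 if i = y, else 0). For a row vector x ∈ ℝ^d define the softmax probabilities P(x)_i = exp((xW)_i) / Σ_{j=1}^C exp((xW)_j) and the cross-entropy gradient G(x) = xᵀ (P(x) − Y) ∈ ℝ^{d×C}. Then for all x, x' ∈ ℝ^d with ‖x‖₂ ≤ 1 and ‖x'‖₂ ≤ 1: ‖G(x) − G(x')‖_F ≤ √(2 + 2ρ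 + ρ²) · ‖x − x'‖₂. -/
open MeasureTheory ProbabilityTheory Real
open scoped Classical RealInnerProductSpace BigOperators

/-- Softmax probabilities of the linear model `x ↦ xW`. -/
noncomputable def softmaxP {d C : ℕ} (W : Matrix (Fin d) (Fin C) ℝ) (x : Fin d → ℝ)
    (j : Fin C) : ℝ :=
  Real.exp (Matrix.vecMul x W j) / ∑ k : Fin C, Real.exp (Matrix.vecMul x W k)

/-- Gradient of the cross-entropy loss of multi-class logistic regression with respect to
the weight matrix, at sample `(x, y)`: `G(x) = xᵀ (P(x) − Y)`. -/
noncomputable def ceGrad {d C : ℕ} (W : Matrix (Fin d) (Fin C) ℝ) (y : Fin C)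
    (x : Fin d → ℝ) : Matrix (Fin d) (Fin C) ℝ :=
  fun i j => x i * (softmaxP W x j - (if j = y then 1 else 0))

section LipHelpers
open Finset


lemma cs_sqrt {ι : Type*} [Fintype ι] (f g : ι → ℝ) :
    ∑ i, f i * g i ≤ Real.sqrt (∑ i, f i ^ 2) * Real.sqrt (∑ i, g i ^ 2) := by
  have h := Finset.sum_mul_sq_le_sq_mul_sq Finset.univ f g
  calc ∑ i, f i * g i ≤ |∑ i, f i * g i| := le_abs_self _
    _ = Real.sqrt ((∑ i, f i * g i) ^ 2) := (Real.sqrt_sq_eq_abs _).symm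
    _ ≤ Real.sqrt ((∑ i, f i ^ 2) * ∑ i, g i ^ 2) := Real.sqrt_le_sqrt h
    _ = _ := Real.sqrt_mul (by positivity) _

lemma abs_sum_mul_le {ι : Type*} [Fintype ι] (f g : ι → ℝ) :
    |∑ i, f i * g i| ≤ Real.sqrt (∑ i, f i ^ 2) * Real.sqrt (∑ i, g i ^ 2) := by
  have h := Finset.sum_mul_sq_le_sq_mul_sq Finset.univ f g
  calc |∑ i, f i * g i| = Real.sqrt ((∑ i, f i * g i) ^ 2) := (Real.sqrt_sq_eq_abs _).symm
    _ ≤ Real.sqrt ((∑ i, f i ^ 2) * ∑ i, g i ^ 2) := Real.sqrt_le_sqrt h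
    _ = _ := Real.sqrt_mul (by positivity) _

lemma sqrt_sum_add_le {ι : Type*} [Fintype ι] (f g : ι → ℝ) :
    Real.sqrt (∑ i, (f i + g i) ^ 2)
      ≤ Real.sqrt (∑ i, f i ^ 2) + Real.sqrt (∑ i, g i ^ 2) := by
  have hf : (0:ℝ) ≤ ∑ i, f i ^ 2 := by positivity
  have hg : (0:ℝ) ≤ ∑ i, g i ^ 2 := by positivity
  have key : ∑ i, (f i + g i) ^ 2
      ≤ (Real.sqrt (∑ i, f i ^ 2) + Real.sqrt (∑ i, g i ^ 2)) ^ 2 := by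
    have h1 : ∑ i, (f i + g i) ^ 2
        = (∑ i, f i ^ 2) + 2 * (∑ i, f i * g i) + ∑ i, g i ^ 2 := by
      rw [Finset.mul_sum, ← Finset.sum_add_distrib, ← Finset.sum_add_distrib]
      exact Finset.sum_congr rfl fun i _ => by ring
    rw [h1, add_sq, Real.sq_sqrt hf, Real.sq_sqrt hg]
    have := cs_sqrt f g
    nlinarith
  calc Real.sqrt (∑ i, (f i + g i) ^ 2)
      ≤ Real.sqrt ((Real.sqrt (∑ i, f i ^ 2) + Real.sqrt (∑ i, g i ^ 2)) ^ 2) :=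
        Real.sqrt_le_sqrt key
    _ = _ := Real.sqrt_sq (by positivity)


lemma abs_sum_mul_le' {ι : Type*} [Fintype ι] (f g : ι → ℝ) :
    |∑ i, f i * g i| ≤ Real.sqrt (∑ i, f i ^ 2) * Real.sqrt (∑ i, g i ^ 2) := by
  have h := Finset.sum_mul_sq_le_sq_mul_sq Finset.univ f g
  calc |∑ i, f i * g i| = Real.sqrt ((∑ i, f i * g i) ^ 2) := (Real.sqrt_sq_eq_abs _).symm
    _ ≤ Real.sqrt ((∑ i, f i ^ 2) * ∑ i, g i ^ 2) := Real.sqrt_le_sqrt h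
    _ = _ := Real.sqrt_mul (by positivity) _

/-- Jacobian (Frobenius) bound for softmax at a probability vector `p`. -/
lemma jac_bound {C : ℕ} (p u v : Fin C → ℝ) (hp0 : ∀ j, 0 ≤ p j)
    (hp1 : ∑ j, p j = 1) :
    |∑ j, v j * (p j * (u j - ∑ k, p k * u k))|
      ≤ Real.sqrt (∑ j, v j ^ 2) * ((1/2) * Real.sqrt (∑ j, u j ^ 2)) := by
  set c : ℝ := ∑ k, p k * u k with hc
  set s : ℝ := ∑ j, p j ^ 2 with hs
  set t : ℝ := ∑ j, p j ^ 3 with ht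
  have hs1 : s ≤ 1 := by
    rw [hs, ← hp1]
    refine Finset.sum_le_sum fun j _ => ?_
    have hj1 : p j ≤ 1 := by
      rw [← hp1]
      exact Finset.single_le_sum (fun k _ => hp0 k) (mem_univ j)
    nlinarith [hp0 j]
  have hs0 : 0 ≤ s := by positivity
  have hts : s ^ 2 ≤ t := by
    have := Finset.sum_mul_sq_le_sq_mul_sq Finset.univ
      (fun j => Real.sqrt (p j)) (fun j => p j * Real.sqrt (p j))
    have e1 : ∀ j, Real.sqrt (p j) * (p j * Real.sqrt (p j)) = p j ^ 2 := fun j => by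
      rw [show Real.sqrt (p j) * (p j * Real.sqrt (p j))
          = Real.sqrt (p j) * Real.sqrt (p j) * p j from by ring,
        Real.mul_self_sqrt (hp0 j)]; ring
    have e2 : ∀ j, (Real.sqrt (p j)) ^ 2 = p j := fun j => Real.sq_sqrt (hp0 j)
    have e3 : ∀ j, (p j * Real.sqrt (p j)) ^ 2 = p j ^ 3 := fun j => by
      rw [mul_pow, Real.sq_sqrt (hp0 j)]; ring
    simp only [e1, e2, e3] at this
    calc s ^ 2 = (∑ j, p j ^ 2) ^ 2 := by rw [hs]
      _ ≤ (∑ j, p j) * ∑ j, p j ^ 3 := this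
      _ = t := by rw [hp1, one_mul, ht]
  -- pointwise: (u j - c)^2 ≤ (1 - 2 p j + s) * ∑ u^2
  have hpt : ∀ j, (u j - c) ^ 2 ≤ (1 - 2 * p j + s) * ∑ k, u k ^ 2 := by
    intro j
    have hrep : u j - c = ∑ k, ((if k = j then 1 else 0) - p k) * u k := by
      have : ∑ k, ((if k = j then 1 else 0) - p k) * u k
          = (∑ k, (if k = j then 1 else 0) * u k) - ∑ k, p k * u k := by
        rw [← Finset.sum_sub_distrib]
        exact Finset.sum_congr rfl fun k _ => by ring
      rw [this, hc]
      congr 1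
      simp [ite_mul, Finset.sum_ite_eq']
    have hcs := Finset.sum_mul_sq_le_sq_mul_sq Finset.univ
      (fun k => (if k = j then 1 else 0) - p k) u
    have hsq : ∑ k, ((if k = j then 1 else 0) - p k) ^ 2 = 1 - 2 * p j + s := by
      have : ∀ k, ((if k = j then 1 else 0) - p k) ^ 2
          = (if k = j then (1:ℝ) else 0) - 2 * ((if k = j then 1 else 0) * p k) + p k ^ 2 := by
        intro k; by_cases h : k = j <;> simp [h] <;> ring
      simp only [this, Finset.sum_add_distrib, Finset.sum_sub_distrib]
      rw [← Finset.mul_sum]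
      simp [Finset.sum_ite_eq', hs]
    rw [hrep]
    calc (∑ k, ((if k = j then 1 else 0) - p k) * u k) ^ 2
        ≤ (∑ k, ((if k = j then 1 else 0) - p k) ^ 2) * ∑ k, u k ^ 2 := hcs
      _ = (1 - 2 * p j + s) * ∑ k, u k ^ 2 := by rw [hsq]
  -- sum of squares of w j = p j * (u j - c)
  have hw : ∑ j, (p j * (u j - c)) ^ 2 ≤ (1/4) * ∑ k, u k ^ 2 := by
    have h1 : ∑ j, (p j * (u j - c)) ^ 2
        ≤ ∑ j, p j ^ 2 * ((1 - 2 * p j + s) * ∑ k, u k ^ 2) := by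
      refine Finset.sum_le_sum fun j _ => ?_
      have := hpt j
      have hpj := sq_nonneg (p j)
      calc (p j * (u j - c)) ^ 2 = p j ^ 2 * (u j - c) ^ 2 := by ring
        _ ≤ p j ^ 2 * ((1 - 2 * p j + s) * ∑ k, u k ^ 2) := by
            exact mul_le_mul_of_nonneg_left this hpj
    have h2 : ∑ j, p j ^ 2 * ((1 - 2 * p j + s) * ∑ k, u k ^ 2)
        = (s - 2 * t + s * s) * ∑ k, u k ^ 2 := by
      have e : ∀ j : Fin C, p j ^ 2 * ((1 - 2 * p j + s) * ∑ k, u k ^ 2)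
          = (p j ^ 2 - 2 * p j ^ 3 + s * p j ^ 2) * ∑ k, u k ^ 2 := fun j => by ring
      simp only [e]
      rw [← Finset.sum_mul]
      congr 1
      simp only [Finset.sum_add_distrib, Finset.sum_sub_distrib, ← Finset.mul_sum]
      rw [← hs, ← ht]
    have h3 : s - 2 * t + s * s ≤ 1/4 := by nlinarith [sq_nonneg (s - 1/2), hts]
    have hu0 : (0:ℝ) ≤ ∑ k, u k ^ 2 := by positivity
    calc ∑ j, (p j * (u j - c)) ^ 2 ≤ (s - 2 * t + s * s) * ∑ k, u k ^ 2 := h1.trans h2.le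
      _ ≤ (1/4) * ∑ k, u k ^ 2 := by nlinarith
  calc |∑ j, v j * (p j * (u j - c))|
      ≤ Real.sqrt (∑ j, v j ^ 2) * Real.sqrt (∑ j, (p j * (u j - c)) ^ 2) :=
        abs_sum_mul_le' _ _
    _ ≤ Real.sqrt (∑ j, v j ^ 2) * ((1/2) * Real.sqrt (∑ j, u j ^ 2)) := by
        refine mul_le_mul_of_nonneg_left ?_ (Real.sqrt_nonneg _)
        calc Real.sqrt (∑ j, (p j * (u j - c)) ^ 2)
            ≤ Real.sqrt ((1/4) * ∑ k, u k ^ 2) := Real.sqrt_le_sqrt hw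
          _ = (1/2) * Real.sqrt (∑ j, u j ^ 2) := by
              rw [show (1:ℝ)/4 = (1/2)^2 by norm_num, Real.sqrt_mul (by positivity),
                Real.sqrt_sq (by norm_num)]


noncomputable def sm' {C : ℕ} (z : Fin C → ℝ) (j : Fin C) : ℝ :=
  Real.exp (z j) / ∑ k : Fin C, Real.exp (z k)

-- outer product Frobenius norm over product index
lemma outer_norm {d C : ℕ} (a : Fin d → ℝ) (b : Fin C → ℝ) :
    Real.sqrt (∑ q : Fin d × Fin C, (a q.1 * b q.2) ^ 2)
      = Real.sqrt (∑ i, a i ^ 2) * Real.sqrt (∑ j, b j ^ 2) := by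
  have h : ∑ q : Fin d × Fin C, (a q.1 * b q.2) ^ 2
      = (∑ i, a i ^ 2) * ∑ j, b j ^ 2 := by
    rw [Fintype.sum_prod_type, Finset.sum_mul_sum]
    exact Finset.sum_congr rfl fun i _ => Finset.sum_congr rfl fun j _ => by ring
  rw [h, Real.sqrt_mul (by positivity)]

-- matrix-vector Cauchy-Schwarz
lemma matvec_cs {d C : ℕ} (c : Fin d → ℝ) (W : Matrix (Fin d) (Fin C) ℝ) :
    Real.sqrt (∑ j, (∑ i, c i * W i j) ^ 2)
      ≤ Real.sqrt (∑ i, ∑ j, W i j ^ 2) * Real.sqrt (∑ i, c i ^ 2) := by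
  have h : ∑ j, (∑ i, c i * W i j) ^ 2
      ≤ ∑ j, (∑ i, c i ^ 2) * ∑ i, W i j ^ 2 := by
    refine Finset.sum_le_sum fun j _ => ?_
    exact Finset.sum_mul_sq_le_sq_mul_sq Finset.univ c (fun i => W i j)
  have h2 : ∑ j, (∑ i, c i ^ 2) * ∑ i, W i j ^ 2
      = (∑ i, ∑ j, W i j ^ 2) * ∑ i, c i ^ 2 := by
    rw [← Finset.mul_sum, Finset.sum_comm]; ring
  calc Real.sqrt (∑ j, (∑ i, c i * W i j) ^ 2)
      ≤ Real.sqrt ((∑ i, ∑ j, W i j ^ 2) * ∑ i, c i ^ 2) :=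
        Real.sqrt_le_sqrt (h.trans h2.le)
    _ = _ := Real.sqrt_mul (by positivity) _

-- probability vector facts for softmax
lemma sm'_nonneg {C : ℕ} (hC : 0 < C) (z : Fin C → ℝ) (j : Fin C) : 0 ≤ sm' z j := by
  haveI : Nonempty (Fin C) := ⟨⟨0, hC⟩⟩
  have : (0:ℝ) < ∑ k : Fin C, Real.exp (z k) :=
    Finset.sum_pos (fun k _ => Real.exp_pos _) Finset.univ_nonempty
  exact le_of_lt (div_pos (Real.exp_pos _) this)

lemma sm'_sum {C : ℕ} (hC : 0 < C) (z : Fin C → ℝ) : ∑ j, sm' z j = 1 := by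
  haveI : Nonempty (Fin C) := ⟨⟨0, hC⟩⟩
  have hS : (0:ℝ) < ∑ k : Fin C, Real.exp (z k) :=
    Finset.sum_pos (fun k _ => Real.exp_pos _) Finset.univ_nonempty
  have : ∑ j, sm' z j = (∑ j, Real.exp (z j)) / ∑ k, Real.exp (z k) := by
    rw [Finset.sum_div]; rfl
  rw [this]
  exact div_self hS.ne'

lemma prob_sub_onehot {C : ℕ} (hC : 0 < C) (P : Fin C → ℝ) (y : Fin C)
    (h0 : ∀ j, 0 ≤ P j) (h1 : ∑ j, P j = 1) :
    ∑ j, (P j - (if j = y then (1:ℝ) else 0)) ^ 2 ≤ 2 := by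
  have hle : ∀ j, P j ≤ 1 := fun j => by
    rw [← h1]; exact Finset.single_le_sum (fun k _ => h0 k) (mem_univ j)
  have hsq : ∑ j, P j ^ 2 ≤ 1 := by
    rw [← h1]
    exact Finset.sum_le_sum fun j _ => by nlinarith [h0 j, hle j]
  have hexp : ∑ j, (P j - (if j = y then (1:ℝ) else 0)) ^ 2
      = (∑ j, P j ^ 2) - 2 * P y + 1 := by
    have e : ∀ j, (P j - (if j = y then (1:ℝ) else 0)) ^ 2
        = P j ^ 2 - 2 * (P j * (if j = y then 1 else 0)) + (if j = y then (1:ℝ) else 0) := by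
      intro j; by_cases h : j = y <;> simp [h] <;> ring
    simp only [e, Finset.sum_add_distrib, Finset.sum_sub_distrib, ← Finset.mul_sum]
    simp [mul_ite, Finset.sum_ite_eq']
  rw [hexp]
  nlinarith [h0 y]


lemma softmax_lip {C : ℕ} (hC : 0 < C) (z z' : Fin C → ℝ)
    (hjac : ∀ (p u v : Fin C → ℝ), (∀ j, 0 ≤ p j) → (∑ j, p j) = 1 →
      |∑ j, v j * (p j * (u j - ∑ k, p k * u k))|
        ≤ Real.sqrt (∑ j, v j ^ 2) * ((1/2) * Real.sqrt (∑ j, u j ^ 2))) :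
    Real.sqrt (∑ j, (sm' z j - sm' z' j) ^ 2)
      ≤ (1/2) * Real.sqrt (∑ j, (z j - z' j) ^ 2) := by
  haveI : Nonempty (Fin C) := ⟨⟨0, hC⟩⟩
  set u : Fin C → ℝ := fun j => z j - z' j with hu
  set v : Fin C → ℝ := fun j => sm' z j - sm' z' j with hv
  set g : ℝ → Fin C → ℝ := fun t j => Real.exp (z' j + t * u j) with hg
  set S : ℝ → ℝ := fun t => ∑ k, g t k with hS
  have hSpos : ∀ t, 0 < S t := fun t =>
    Finset.sum_pos (fun k _ => Real.exp_pos _) Finset.univ_nonempty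
  -- derivatives
  have hgd : ∀ t (j : Fin C), HasDerivAt (fun t => g t j) (g t j * u j) t := by
    intro t j
    have h1 : HasDerivAt (fun t : ℝ => z' j + t * u j) (u j) t := by
      simpa using ((hasDerivAt_id t).mul_const (u j)).const_add (z' j)
    exact h1.exp
  have hSd : ∀ t, HasDerivAt S (∑ k, g t k * u k) t := fun t =>
    HasDerivAt.fun_sum fun k _ => hgd t k
  set D : ℝ → ℝ := fun t =>
    ∑ j, v j * ((g t j * u j * S t - g t j * ∑ k, g t k * u k) / (S t) ^ 2) with hD
  set φ : ℝ → ℝ := fun t => ∑ j, v j * (g t j / S t) with hφ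
  have hφd : ∀ t, HasDerivAt φ (D t) t := by
    intro t
    refine HasDerivAt.fun_sum fun j _ => ?_
    exact ((hgd t j).div (hSd t) (hSpos t).ne').const_mul (v j)
  -- MVT
  have hmvt := exists_hasDerivAt_eq_slope φ D zero_lt_one
    (fun t _ => (hφd t).continuousAt.continuousWithinAt)
    (fun t _ => hφd t)
  obtain ⟨ξ, -, hξ⟩ := hmvt
  have hφ1 : φ 1 = ∑ j, v j * sm' z j := by
    refine Finset.sum_congr rfl fun j _ => ?_
    have e : ∀ k : Fin C, z' k + 1 * u k = z k := fun k => by simp [hu]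
    simp only [hg, hS, sm', e]
  have hφ0 : φ 0 = ∑ j, v j * sm' z' j := by
    refine Finset.sum_congr rfl fun j _ => ?_
    have e : ∀ k : Fin C, z' k + 0 * u k = z' k := fun k => by simp
    simp only [hg, hS, sm', e]
  have hslope : D ξ = ∑ j, v j ^ 2 := by
    rw [hξ, hφ1, hφ0]
    rw [← Finset.sum_sub_distrib]
    simp only [sub_zero, div_one]
    exact Finset.sum_congr rfl fun j _ => by rw [hv]; ring
  -- rewrite D ξ in jacobian form
  set p : Fin C → ℝ := fun j => g ξ j / S ξ with hp
  have hp0 : ∀ j, 0 ≤ p j := fun j => le_of_lt (div_pos (Real.exp_pos _) (hSpos ξ))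
  have hp1 : ∑ j, p j = 1 := by
    rw [hp, ← Finset.sum_div]
    exact div_self (hSpos ξ).ne'
  have hDrew : D ξ = ∑ j, v j * (p j * (u j - ∑ k, p k * u k)) := by
    refine Finset.sum_congr rfl fun j _ => ?_
    congr 1
    have hc : ∑ k, p k * u k = (∑ k, g ξ k * u k) / S ξ := by
      rw [Finset.sum_div]
      exact Finset.sum_congr rfl fun k _ => by rw [hp]; ring
    have key : ∀ (a s0 b uj : ℝ), s0 ≠ 0 →
        (a * uj * s0 - a * b) / s0 ^ 2 = a / s0 * (uj - b / s0) := by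
      intro a s0 b uj hs; field_simp
    rw [hc, hp]
    exact key _ _ _ _ (hSpos ξ).ne'
  have hbound := hjac p u v hp0 hp1
  rw [← hDrew] at hbound
  have hVsq : ∑ j, v j ^ 2 ≤ |D ξ| := by rw [hslope]; exact le_abs_self _
  have hmain : ∑ j, v j ^ 2
      ≤ Real.sqrt (∑ j, v j ^ 2) * ((1/2) * Real.sqrt (∑ j, u j ^ 2)) :=
    hVsq.trans hbound
  set V := Real.sqrt (∑ j, v j ^ 2) with hV
  have hVnn : 0 ≤ V := Real.sqrt_nonneg _
  have hVsq' : V ^ 2 = ∑ j, v j ^ 2 := Real.sq_sqrt (by positivity)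
  show V ≤ (1/2) * Real.sqrt (∑ j, u j ^ 2)
  rcases eq_or_lt_of_le hVnn with h0 | hpos
  · rw [← h0]; positivity
  · have : V * V ≤ V * ((1/2) * Real.sqrt (∑ j, u j ^ 2)) := by
      rw [← sq, hVsq']; exact hmain
    exact le_of_mul_le_mul_left this hpos

end LipHelpers

set_option maxHeartbeats 1000000 in
theorem logistic_regression_gradient_lipschitz (d C : ℕ) (hd : 1 ≤ d) (hC : 1 ≤ C)
    (W : Matrix (Fin d) (Fin C) ℝ) (ρ : ℝ) (hρ : 0 ≤ ρ)
    (hW : Real.sqrt (∑ i : Fin d, ∑ j : Fin C, (W i j) ^ 2) ≤ ρ)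
    (y : Fin C) (x x' : Fin d → ℝ)
    (hx : Real.sqrt (∑ i : Fin d, (x i) ^ 2) ≤ 1)
    (hx' : Real.sqrt (∑ i : Fin d, (x' i) ^ 2) ≤ 1) :
    Real.sqrt (∑ i : Fin d, ∑ j : Fin C, (ceGrad W y x i j - ceGrad W y x' i j) ^ 2)
      ≤ Real.sqrt (2 + 2 * ρ + ρ ^ 2) * Real.sqrt (∑ i : Fin d, (x i - x' i) ^ 2) := by
  have hC0 : 0 < C := hC
  have hsm : ∀ (u : Fin d → ℝ) (j : Fin C), softmaxP W u j = sm' (Matrix.vecMul u W) j :=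
    fun u j => rfl
  have prob_bound : ∑ j, (softmaxP W x j - (if j = y then (1:ℝ) else 0)) ^ 2 ≤ 2 := by
    simp only [hsm]
    exact prob_sub_onehot hC0 _ y (sm'_nonneg hC0 _) (sm'_sum hC0 _)
  have smlip : Real.sqrt (∑ j, (softmaxP W x j - softmaxP W x' j) ^ 2)
      ≤ (1/2) * Real.sqrt (∑ j, (Matrix.vecMul x W j - Matrix.vecMul x' W j) ^ 2) := by
    simp only [hsm]
    exact softmax_lip hC0 _ _ (fun p u v h0 h1 => jac_bound p u v h0 h1)
  set X := Real.sqrt (∑ i, (x i - x' i) ^ 2) with hX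
  have hXnn : 0 ≤ X := Real.sqrt_nonneg _
  set F : Fin d × Fin C → ℝ :=
    fun q => (x q.1 - x' q.1) * (softmaxP W x q.2 - (if q.2 = y then 1 else 0)) with hF
  set G : Fin d × Fin C → ℝ :=
    fun q => x' q.1 * (softmaxP W x q.2 - softmaxP W x' q.2) with hG
  have hflat : ∑ i : Fin d, ∑ j : Fin C, (ceGrad W y x i j - ceGrad W y x' i j) ^ 2
      = ∑ q : Fin d × Fin C, (F q + G q) ^ 2 := by
    rw [Fintype.sum_prod_type]
    refine Finset.sum_congr rfl fun i _ => Finset.sum_congr rfl fun j _ => ?_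
    simp only [hF, hG, ceGrad]
    ring
  have hF' : Real.sqrt (∑ q : Fin d × Fin C, F q ^ 2)
      = X * Real.sqrt (∑ j, (softmaxP W x j - (if j = y then (1:ℝ) else 0)) ^ 2) :=
    outer_norm (fun i => x i - x' i) (fun j => softmaxP W x j - (if j = y then 1 else 0))
  have hG' : Real.sqrt (∑ q : Fin d × Fin C, G q ^ 2)
      = Real.sqrt (∑ i, x' i ^ 2)
        * Real.sqrt (∑ j, (softmaxP W x j - softmaxP W x' j) ^ 2) :=
    outer_norm x' (fun j => softmaxP W x j - softmaxP W x' j)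
  have hA : Real.sqrt (∑ j, (softmaxP W x j - (if j = y then (1:ℝ) else 0)) ^ 2)
      ≤ Real.sqrt 2 := Real.sqrt_le_sqrt prob_bound
  have hz : ∀ j, Matrix.vecMul x W j - Matrix.vecMul x' W j
      = ∑ i, (x i - x' i) * W i j := by
    intro j
    simp only [Matrix.vecMul, dotProduct, ← Finset.sum_sub_distrib]
    exact Finset.sum_congr rfl fun i _ => by ring
  have hzb : Real.sqrt (∑ j, (Matrix.vecMul x W j - Matrix.vecMul x' W j) ^ 2)
      ≤ ρ * X := by
    simp only [hz]
    calc Real.sqrt (∑ j, (∑ i, (x i - x' i) * W i j) ^ 2)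
        ≤ Real.sqrt (∑ i, ∑ j, W i j ^ 2) * X := matvec_cs (fun i => x i - x' i) W
      _ ≤ ρ * X := mul_le_mul_of_nonneg_right hW hXnn
  have hB : Real.sqrt (∑ j, (softmaxP W x j - softmaxP W x' j) ^ 2)
      ≤ (1/2) * (ρ * X) := by
    calc Real.sqrt (∑ j, (softmaxP W x j - softmaxP W x' j) ^ 2)
        ≤ (1/2) * Real.sqrt (∑ j, (Matrix.vecMul x W j - Matrix.vecMul x' W j) ^ 2) := smlip
      _ ≤ (1/2) * (ρ * X) := by linarith [hzb]
  have hs2 : Real.sqrt 2 ^ 2 = 2 := Real.sq_sqrt (by norm_num)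
  have hs2' : Real.sqrt 2 ≤ 2 := by nlinarith [Real.sqrt_nonneg 2]
  have hkey : Real.sqrt 2 + ρ/2 ≤ Real.sqrt (2 + 2*ρ + ρ^2) := by
    rw [Real.le_sqrt (by positivity) (by positivity)]
    nlinarith
  have hQnn : 0 ≤ Real.sqrt (∑ j, (softmaxP W x j - softmaxP W x' j) ^ 2) :=
    Real.sqrt_nonneg _
  rw [hflat]
  calc Real.sqrt (∑ q : Fin d × Fin C, (F q + G q) ^ 2)
      ≤ Real.sqrt (∑ q : Fin d × Fin C, F q ^ 2)
        + Real.sqrt (∑ q : Fin d × Fin C, G q ^ 2) := sqrt_sum_add_le F G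
    _ = X * Real.sqrt (∑ j, (softmaxP W x j - (if j = y then (1:ℝ) else 0)) ^ 2)
        + Real.sqrt (∑ i, x' i ^ 2)
          * Real.sqrt (∑ j, (softmaxP W x j - softmaxP W x' j) ^ 2) := by rw [hF', hG']
    _ ≤ X * Real.sqrt 2 + 1 * ((1/2) * (ρ * X)) :=
        add_le_add (mul_le_mul_of_nonneg_left hA hXnn)
          (mul_le_mul hx' hB hQnn zero_le_one)
    _ = (Real.sqrt 2 + ρ/2) * X := by ring
    _ ≤ Real.sqrt (2 + 2*ρ + ρ^2) * X := mul_le_mul_of_nonneg_right hkey hXnn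
end
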